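/- arXiv:2409.11663 — 4 statements merged into one kernel-verified Lean document; each statement's English description precedes it below -/
import Mathlib

section
/- Let N ≥ 1, let S > 0 and σ > 0, and let V ∈ ℝ^N. Let τx_0,…,τx_{N−1}, τy_0,…,τy_{N−1} be 2N independent real random variables, each with law gaussianReal 0 (S²σ²/2), and set τ_k = τx_k + i·τy_k ∈ ℂ. Then for every index j ∈ {0,…,N−1}, the law of the real random variable Re((F⁻¹(F(V) + τ))_j) — that is, the pushforward of the product measure ⊗_{k=0}^{N−1} (gaussianReal 0 (S²σ²/2) ⊗ gaussianReal 0 (S²σ²/2)) under the map (τx, τy) ↦ Re((F⁻¹(F(V) + τx + i·τy))_j), where V is regarded as an element of ℂ^N — is gaussianReal (V_j) (S²σ²/2). -/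
open MeasureTheory ProbabilityTheory

/-- The unitary discrete Fourier transform on `ℂ^N`. -/
noncomputable def dft {N : ℕ} (z : Fin N → ℂ) : Fin N → ℂ := fun i =>
  (1 / (Real.sqrt N : ℂ)) *
    ∑ n : Fin N, z n * Complex.exp (-(2 * (Real.pi : ℂ) * Complex.I * (i : ℕ) * (n : ℕ)) / N)

/-- The inverse unitary discrete Fourier transform on `ℂ^N`. -/
noncomputable def idft {N : ℕ} (z : Fin N → ℂ) : Fin N → ℂ := fun n =>
  (1 / (Real.sqrt N : ℂ)) *
    ∑ i : Fin N, z i * Complex.exp ((2 * (Real.pi : ℂ) * Complex.I * (i : ℕ) * (n : ℕ)) / N)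

namespace GREDP
open scoped ENNReal NNReal
open Real Complex


lemma pdf_conv_pointwise {v1 v2 : ℝ≥0} (h1 : v1 ≠ 0) (h2 : v2 ≠ 0) (u x : ℝ) :
    gaussianPDFReal 0 v1 x * gaussianPDFReal 0 v2 (u - x)
      = gaussianPDFReal 0 (v1 + v2) u *
        gaussianPDFReal 0 (v1 * v2 / (v1 + v2)) (x - v1 * u / (v1 + v2)) := by
  have ha : (0:ℝ) < v1 := lt_of_le_of_ne (v1.coe_nonneg) (by exact_mod_cast (Ne.symm h1))
  have hb : (0:ℝ) < v2 := lt_of_le_of_ne (v2.coe_nonneg) (by exact_mod_cast (Ne.symm h2))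
  have hab : (0:ℝ) < (v1:ℝ) + v2 := by linarith
  have hπ : (0:ℝ) < π := Real.pi_pos
  simp only [gaussianPDFReal, sub_zero, NNReal.coe_add, NNReal.coe_div, NNReal.coe_mul]
  rw [mul_mul_mul_comm, mul_mul_mul_comm ((√(2 * π * ((v1:ℝ) + v2)))⁻¹)]
  congr 1
  · rw [← mul_inv, ← mul_inv, ← Real.sqrt_mul (by positivity), ← Real.sqrt_mul (by positivity)]
    congr 1
    field_simp
  · rw [← Real.exp_add, ← Real.exp_add]
    congr 1
    field_simp
    ring

lemma lintegral_pdf_conv {v1 v2 : ℝ≥0} (h1 : v1 ≠ 0) (h2 : v2 ≠ 0) (u : ℝ) :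
    ∫⁻ x, gaussianPDF 0 v1 x * gaussianPDF 0 v2 (u - x) = gaussianPDF 0 (v1 + v2) u := by
  have hc : v1 * v2 / (v1 + v2) ≠ 0 := by
    have : v1 + v2 ≠ 0 := by simp [h1, h2]
    simp [div_eq_zero_iff, h1, h2, this]
  calc ∫⁻ x, gaussianPDF 0 v1 x * gaussianPDF 0 v2 (u - x)
      = ∫⁻ x, gaussianPDF 0 (v1 + v2) u *
          gaussianPDF 0 (v1 * v2 / (v1 + v2)) (x - v1 * u / (v1 + v2)) := by
        congr 1; ext x
        simp only [gaussianPDF]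
        rw [← ENNReal.ofReal_mul (gaussianPDFReal_nonneg _ _ _),
          ← ENNReal.ofReal_mul (gaussianPDFReal_nonneg _ _ _),
          pdf_conv_pointwise h1 h2 u x]
    _ = gaussianPDF 0 (v1 + v2) u *
          ∫⁻ x, gaussianPDF 0 (v1 * v2 / (v1 + v2)) (x - v1 * u / (v1 + v2)) := by
        exact lintegral_const_mul' _ _ ENNReal.ofReal_ne_top
    _ = gaussianPDF 0 (v1 + v2) u := by
        rw [lintegral_sub_right_eq_self (gaussianPDF 0 (v1 * v2 / (v1 + v2))) _,
          lintegral_gaussianPDF_eq_one _ hc, mul_one]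

lemma gauss_conv (v1 v2 : ℝ≥0) :
    Measure.map (fun p : ℝ × ℝ => p.1 + p.2)
      ((gaussianReal 0 v1).prod (gaussianReal 0 v2)) = gaussianReal 0 (v1 + v2) := by
  by_cases h1 : v1 = 0
  · subst h1
    have hm : Measurable fun y : ℝ => ((0:ℝ), y) := measurable_const.prodMk measurable_id
    rw [gaussianReal_zero_var, Measure.dirac_prod, zero_add,
      Measure.map_map measurable_add hm]
    simp only [Function.comp_def, zero_add]
    exact Measure.map_id
  by_cases h2 : v2 = 0
  · subst h2
    have hm : Measurable fun x : ℝ => (x, (0:ℝ)) := measurable_id.prodMk measurable_const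
    rw [gaussianReal_zero_var, Measure.prod_dirac, add_zero,
      Measure.map_map measurable_add hm]
    simp only [Function.comp_def, add_zero]
    exact Measure.map_id
  have h12 : v1 + v2 ≠ 0 := by simp [h1, h2]
  rw [gaussianReal_of_var_ne_zero _ h1, gaussianReal_of_var_ne_zero _ h2,
    gaussianReal_of_var_ne_zero _ h12]
  ext s hs
  rw [Measure.map_apply measurable_add hs,
    Measure.prod_apply (measurable_add hs)]
  set g : ℝ × ℝ → ℝ≥0∞ :=
    Set.indicator {q : ℝ × ℝ | q.2 ∈ s} (fun q : ℝ × ℝ => gaussianPDF 0 v2 (q.2 - q.1)) with hg_def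
  have hmeasg : Measurable g :=
    ((measurable_gaussianPDF _ _).comp (measurable_snd.sub measurable_fst)).indicator
      (measurable_snd hs)
  -- inner measure
  have hinner : ∀ x : ℝ, (volume.withDensity (gaussianPDF 0 v2))
      (Prod.mk x ⁻¹' ((fun p : ℝ × ℝ => p.1 + p.2) ⁻¹' s)) = ∫⁻ y, g (x, y) := by
    intro x
    have hB : MeasurableSet ((fun y : ℝ => x + y) ⁻¹' s) := (measurable_const_add x) hs
    rw [show Prod.mk x ⁻¹' ((fun p : ℝ × ℝ => p.1 + p.2) ⁻¹' s)
        = (fun y : ℝ => x + y) ⁻¹' s from rfl,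
      withDensity_apply _ hB, ← lintegral_indicator hB]
    have h1 : ∀ y : ℝ, Set.indicator ((fun y : ℝ => x + y) ⁻¹' s) (gaussianPDF 0 v2) y
        = g (x, x + y) := by
      intro y
      by_cases hy : x + y ∈ s <;>
        simp [hg_def, Set.indicator_apply, hy, Set.mem_preimage, add_sub_cancel_left]
    simp_rw [h1]
    exact lintegral_add_left_eq_self (fun y => g (x, y)) x
  simp_rw [hinner]
  rw [lintegral_withDensity_eq_lintegral_mul _ (measurable_gaussianPDF _ _)
    hmeasg.lintegral_prod_right']
  simp only [Pi.mul_apply]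
  have hswap : ∫⁻ x, gaussianPDF 0 v1 x * ∫⁻ y, g (x, y)
      = ∫⁻ y, ∫⁻ x, gaussianPDF 0 v1 x * g (x, y) := by
    have hstep : ∀ x : ℝ, gaussianPDF 0 v1 x * ∫⁻ y, g (x, y)
        = ∫⁻ y, gaussianPDF 0 v1 x * g (x, y) :=
      fun x => (lintegral_const_mul' _ _ ENNReal.ofReal_ne_top).symm
    simp_rw [hstep]
    exact lintegral_lintegral_swap
      (((measurable_gaussianPDF _ _).comp measurable_fst).mul hmeasg).aemeasurable
  rw [hswap]
  have hy : ∀ y : ℝ, (∫⁻ x, gaussianPDF 0 v1 x * g (x, y))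
      = Set.indicator s (gaussianPDF 0 (v1 + v2)) y := by
    intro y
    by_cases hys : y ∈ s
    · rw [Set.indicator_of_mem hys]
      rw [← lintegral_pdf_conv h1 h2 y]
      congr 1; ext x
      simp [hg_def, Set.indicator_apply, hys]
    · rw [Set.indicator_of_notMem hys]
      have : ∀ x : ℝ, gaussianPDF 0 v1 x * g (x, y) = 0 := by
        intro x; simp [hg_def, Set.indicator_apply, hys]
      simp_rw [this, lintegral_zero]
  simp_rw [hy]
  rw [lintegral_indicator hs, withDensity_apply _ hs]

lemma gauss_pair (v : ℝ≥0) (a b : ℝ) :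
    Measure.map (fun p : ℝ × ℝ => a * p.1 + b * p.2)
      ((gaussianReal 0 v).prod (gaussianReal 0 v))
      = gaussianReal 0 ((a ^ 2 + b ^ 2).toNNReal * v) := by
  have h : (fun p : ℝ × ℝ => a * p.1 + b * p.2)
      = (fun p : ℝ × ℝ => p.1 + p.2) ∘ Prod.map (a * ·) (b * ·) := rfl
  rw [h, ← Measure.map_map measurable_add
      ((measurable_const_mul a).prodMap (measurable_const_mul b)),
    ← Measure.map_prod_map _ _ (measurable_const_mul a) (measurable_const_mul b),
    gaussianReal_map_const_mul, gaussianReal_map_const_mul]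
  simp only [mul_zero]
  rw [gauss_conv]
  congr 1
  ext
  push_cast
  rw [Real.coe_toNNReal _ (by positivity)]
  ring

lemma measurable_gsum (n : ℕ) (c d : Fin n → ℝ) :
    Measurable (fun τ : Fin n → ℝ × ℝ => ∑ k, (c k * (τ k).1 + d k * (τ k).2)) :=
  Finset.measurable_sum _ fun k _ =>
    (((measurable_pi_apply k).fst.const_mul _).add ((measurable_pi_apply k).snd.const_mul _))

lemma gauss_sum (v : ℝ≥0) : ∀ (n : ℕ) (c d : Fin n → ℝ),
    Measure.map (fun τ : Fin n → ℝ × ℝ => ∑ k, (c k * (τ k).1 + d k * (τ k).2))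
      (Measure.pi fun _ => (gaussianReal 0 v).prod (gaussianReal 0 v))
      = gaussianReal 0 ((∑ k, ((c k) ^ 2 + (d k) ^ 2)).toNNReal * v) := by
  intro n
  induction n with
  | zero =>
    intro c d
    simp only [Finset.univ_eq_empty, Finset.sum_empty, Real.toNNReal_zero, zero_mul,
      gaussianReal_zero_var]
    rw [Measure.map_const]
    simp
  | succ n ih =>
    intro c d
    set μ0 : Measure (ℝ × ℝ) := (gaussianReal 0 v).prod (gaussianReal 0 v) with hμ0
    have hmp := measurePreserving_piFinSuccAbove (fun _ : Fin (n + 1) => μ0) 0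
    set e := MeasurableEquiv.piFinSuccAbove (fun _ : Fin (n + 1) => ℝ × ℝ) 0 with he
    have hpi : (Measure.pi fun _ : Fin (n + 1) => μ0)
        = Measure.map e.symm (μ0.prod (Measure.pi fun _ : Fin n => μ0)) :=
      (hmp.symm e).map_eq.symm
    rw [hpi, Measure.map_map (measurable_gsum _ c d) e.symm.measurable]
    have hfe : ((fun τ : Fin (n + 1) → ℝ × ℝ => ∑ k, (c k * (τ k).1 + d k * (τ k).2)) ∘ e.symm)
        = (fun q : ℝ × ℝ => q.1 + q.2) ∘
            (Prod.map (fun p : ℝ × ℝ => c 0 * p.1 + d 0 * p.2)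
              (fun τ : Fin n → ℝ × ℝ =>
                ∑ k, (c k.succ * (τ k).1 + d k.succ * (τ k).2))) := by
      funext p
      have hes : e.symm p = Fin.cons p.1 p.2 := by
        simp [he, MeasurableEquiv.piFinSuccAbove, Fin.insertNthEquiv, Fin.insertNth_zero]
      simp [hes, Fin.sum_univ_succ]
    rw [hfe, ← Measure.map_map measurable_add
        (((show Measurable (fun p : ℝ × ℝ => c 0 * p.1 + d 0 * p.2) from (measurable_fst.const_mul _).add (measurable_snd.const_mul _))).prodMap
          (measurable_gsum n _ _)),
      ← Measure.map_prod_map _ _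
        (show Measurable (fun p : ℝ × ℝ => c 0 * p.1 + d 0 * p.2) from (measurable_fst.const_mul _).add (measurable_snd.const_mul _))
        (measurable_gsum n _ _)]
    rw [show (fun p : ℝ × ℝ => c 0 * p.1 + d 0 * p.2)
        = fun p : ℝ × ℝ => c 0 * p.1 + d 0 * p.2 from rfl]
    rw [gauss_pair, ih, gauss_conv]
    congr 1
    ext
    push_cast
    rw [Real.coe_toNNReal _ (by positivity), Real.coe_toNNReal _ (by positivity),
      Real.coe_toNNReal _ (by positivity), Fin.sum_univ_succ]
    ring

lemma orth (N : ℕ) (hN : 0 < N) (n j : Fin N) :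
    ∑ i : Fin N, Complex.exp (-(2 * (π : ℂ) * I * (i : ℕ) * (n : ℕ)) / N)
        * Complex.exp ((2 * (π : ℂ) * I * (i : ℕ) * (j : ℕ)) / N)
      = if n = j then (N : ℂ) else 0 := by
  have hNC : (N : ℂ) ≠ 0 := Nat.cast_ne_zero.mpr hN.ne'
  set w : ℂ := Complex.exp (2 * (π : ℂ) * I * (((j : ℕ) : ℂ) - ((n : ℕ) : ℂ)) / N) with hw
  have hterm : ∀ i : Fin N,
      Complex.exp (-(2 * (π : ℂ) * I * (i : ℕ) * (n : ℕ)) / N)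
        * Complex.exp ((2 * (π : ℂ) * I * (i : ℕ) * (j : ℕ)) / N) = w ^ (i : ℕ) := by
    intro i
    rw [hw, ← Complex.exp_add, ← Complex.exp_nat_mul]
    congr 1
    ring
  simp_rw [hterm]
  rw [Fin.sum_univ_eq_sum_range (fun i => w ^ i) N]
  by_cases hnj : n = j
  · subst hnj
    simp [hw]
  · rw [if_neg hnj]
    have hw1 : w ≠ 1 := by
      rw [hw]
      simp only [ne_eq, Complex.exp_eq_one_iff]
      rintro ⟨k, hk⟩
      have h2πI : (2 : ℂ) * π * I ≠ 0 := by
        simp [Complex.ofReal_ne_zero, Real.pi_ne_zero, Complex.I_ne_zero]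
      have hkey : ((j : ℕ) : ℂ) - ((n : ℕ) : ℂ) = (k : ℂ) * N := by
        apply mul_left_cancel₀ h2πI
        field_simp at hk
        linear_combination (2 * (π : ℂ) * I) * hk
      have hz : ((j : ℕ) : ℤ) - ((n : ℕ) : ℤ) = k * (N : ℤ) := by exact_mod_cast hkey
      have hdvd : (N : ℤ) ∣ ((j : ℕ) : ℤ) - ((n : ℕ) : ℤ) := ⟨k, by rw [hz, mul_comm]⟩
      have habs : |((j : ℕ) : ℤ) - ((n : ℕ) : ℤ)| < (N : ℤ) := by
        have h1 := j.isLt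
        have h2 := n.isLt
        rw [abs_lt]
        omega
      have := Int.eq_zero_of_abs_lt_dvd hdvd habs
      have : (j : ℕ) = (n : ℕ) := by omega
      exact hnj (Fin.ext this.symm)
    rw [geom_sum_eq hw1]
    have hwN : w ^ N = 1 := by
      rw [hw, ← Complex.exp_nat_mul]
      have : (N : ℂ) * (2 * (π : ℂ) * I * (((j : ℕ) : ℂ) - ((n : ℕ) : ℂ)) / N)
          = (((j : ℤ) - (n : ℤ) : ℤ) : ℂ) * (2 * (π : ℂ) * I) := by
        push_cast
        field_simp
      rw [this, Complex.exp_int_mul_two_pi_mul_I]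
    rw [hwN, sub_self, zero_div]

lemma idft_dft (N : ℕ) (hN : 0 < N) (z : Fin N → ℂ) (j : Fin N) :
    idft (dft z) j = z j := by
  have hNR : (0:ℝ) < N := by exact_mod_cast hN
  have hsq : ((Real.sqrt N : ℂ)) * ((Real.sqrt N : ℂ)) = (N : ℂ) := by
    rw [← Complex.ofReal_mul, Real.mul_self_sqrt (le_of_lt hNR)]
    push_cast
    ring
  have hsne : (Real.sqrt N : ℂ) ≠ 0 := by
    simp only [ne_eq, Complex.ofReal_eq_zero]
    positivity
  unfold idft dft
  simp_rw [mul_assoc, ← Finset.mul_sum]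
  rw [← mul_assoc]
  simp_rw [Finset.sum_mul, mul_assoc]
  rw [Finset.sum_comm]
  simp_rw [← Finset.mul_sum]
  have horth : ∀ x : Fin N,
      (∑ i : Fin N, Complex.exp (-(2 * ((π:ℂ) * (Complex.I * (((i:ℕ):ℂ) * ((x:ℕ):ℂ))))) / N)
        * Complex.exp (2 * ((π:ℂ) * (Complex.I * (((i:ℕ):ℂ) * ((j:ℕ):ℂ)))) / N))
      = if x = j then (N:ℂ) else 0 := by
    intro x
    rw [← orth N hN x j]
    refine Finset.sum_congr rfl fun i _ => ?_
    congr 2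
    · ring
    · ring
  simp_rw [horth, mul_ite, mul_zero]
  rw [Finset.sum_ite_eq' Finset.univ j (fun n => z n * (N:ℂ))]
  simp only [Finset.mem_univ, if_true]
  have hNC : (N : ℂ) ≠ 0 := Nat.cast_ne_zero.mpr hN.ne'
  have h2 : (1:ℂ)/(Real.sqrt N : ℂ) * (1/(Real.sqrt N : ℂ)) = 1/(N:ℂ) := by
    rw [div_mul_div_comm, one_mul, hsq]
  rw [← mul_assoc, h2]
  field_simp

lemma key_re (N : ℕ) (hN : 0 < N) (V : Fin N → ℝ) (j : Fin N) (τ : Fin N → ℝ × ℝ) :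
    (idft (fun k => dft (fun n => (V n : ℂ)) k
        + (((τ k).1 : ℂ) + Complex.I * ((τ k).2 : ℂ))) j).re
      = V j + ∑ k : Fin N, ((Real.cos (2*π*(k:ℕ)*(j:ℕ)/N) / Real.sqrt N) * (τ k).1
          + (-(Real.sin (2*π*(k:ℕ)*(j:ℕ)/N)) / Real.sqrt N) * (τ k).2) := by
  have hsplit : ∀ a b : Fin N → ℂ, idft (fun k => a k + b k) j = idft a j + idft b j := by
    intro a b
    simp [idft, add_mul, Finset.sum_add_distrib, mul_add]
  rw [hsplit, idft_dft N hN, Complex.add_re, Complex.ofReal_re]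
  congr 1
  unfold idft
  have h1c : (1 / (Real.sqrt N : ℂ)) = ((1 / Real.sqrt N : ℝ) : ℂ) := by push_cast; ring
  rw [h1c, Complex.re_ofReal_mul, Complex.re_sum, Finset.mul_sum]
  refine Finset.sum_congr rfl fun k _ => ?_
  have harg : (2 * (π : ℂ) * Complex.I * ((k : ℕ) : ℂ) * ((j : ℕ) : ℂ)) / (N : ℂ)
      = ((2*π*(k:ℕ)*(j:ℕ)/N : ℝ) : ℂ) * Complex.I := by push_cast; ring
  rw [harg, Complex.exp_mul_I]
  simp only [Complex.add_re, Complex.mul_re, Complex.mul_im, Complex.ofReal_re,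
    Complex.ofReal_im, Complex.I_re, Complex.I_im, Complex.add_im,
    ← Complex.ofReal_cos, ← Complex.ofReal_sin]
  ring

end GREDP

/-- Theorem 1 of the paper: adding circularly symmetric complex Gaussian noise with
per-component variance `S²σ²/2` in the frequency domain, inverting the transform,
and keeping only the real part yields `V_j` perturbed by a real Gaussian of
variance `S²σ²/2`. -/
theorem gredp_main (N : ℕ) (hN : 1 ≤ N) (S σ : ℝ) (hS : 0 < S) (hσ : 0 < σ)
    (V : Fin N → ℝ) (j : Fin N) :
    Measure.map
      (fun τ : Fin N → ℝ × ℝ =>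
        (idft (fun k => dft (fun n => (V n : ℂ)) k
          + (((τ k).1 : ℂ) + Complex.I * ((τ k).2 : ℂ))) j).re)
      (Measure.pi (fun _ : Fin N =>
        (gaussianReal 0 ((S ^ 2 * σ ^ 2 / 2).toNNReal)).prod
          (gaussianReal 0 ((S ^ 2 * σ ^ 2 / 2).toNNReal))))
      = gaussianReal (V j) ((S ^ 2 * σ ^ 2 / 2).toNNReal) := by
  have hNpos : 0 < N := hN
  have hNR : (0:ℝ) < N := by exact_mod_cast hNpos
  set v : NNReal := (S ^ 2 * σ ^ 2 / 2).toNNReal with hv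
  set c : Fin N → ℝ := fun k => Real.cos (2*Real.pi*(k:ℕ)*(j:ℕ)/N) / Real.sqrt N with hc
  set d : Fin N → ℝ := fun k => -(Real.sin (2*Real.pi*(k:ℕ)*(j:ℕ)/N)) / Real.sqrt N with hd
  have hfun : (fun τ : Fin N → ℝ × ℝ =>
      (idft (fun k => dft (fun n => (V n : ℂ)) k
        + (((τ k).1 : ℂ) + Complex.I * ((τ k).2 : ℂ))) j).re)
      = fun τ => V j + ∑ k : Fin N, (c k * (τ k).1 + d k * (τ k).2) :=
    funext fun τ => GREDP.key_re N hNpos V j τ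
  rw [hfun]
  have hsum : (∑ k : Fin N, ((c k) ^ 2 + (d k) ^ 2)) = 1 := by
    have hterm : ∀ k : Fin N, (c k) ^ 2 + (d k) ^ 2 = 1 / N := by
      intro k
      rw [hc, hd]
      simp only [div_pow, neg_sq]
      rw [Real.sq_sqrt (le_of_lt hNR), ← add_div, Real.cos_sq_add_sin_sq]
    rw [Finset.sum_congr rfl fun k _ => hterm k]
    rw [Finset.sum_const, Finset.card_fin, nsmul_eq_mul]
    field_simp
  have hX := GREDP.gauss_sum v N c d
  rw [hsum, Real.toNNReal_one, one_mul] at hX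
  have hcomp : (fun τ : Fin N → ℝ × ℝ => V j + ∑ k : Fin N, (c k * (τ k).1 + d k * (τ k).2))
      = (fun x : ℝ => V j + x) ∘ (fun τ : Fin N → ℝ × ℝ =>
        ∑ k : Fin N, (c k * (τ k).1 + d k * (τ k).2)) := rfl
  rw [hcomp, ← Measure.map_map (measurable_const_add (V j)) (GREDP.measurable_gsum N c d),
    hX, gaussianReal_map_const_add, zero_add]
end

section
/- Let N ≥ 1, let S > 0 and σ > 0, let a, b ∈ ℝ with a² + b² = 1, and let V ∈ ℝ^N. Let τx_0,…,τx_{N−1} be independent real random variables each with law gaussianReal 0 (a²S²σ²), let τy_0,…,τy_{N−1} be independent real random variables each with law gaussianReal 0 (b²S²σ²), with all 2N variables jointly independent, and set τ_k = τx_k + i·τy_k ∈ ℂ. Then for every index j ∈ {0,…,N−1} such that N does not divide 2j, the law of Re((F⁻¹(F(V) + τ))_j) — the pushforward of the product measure ⊗_{k=0}^{N−1} (gaussianReal 0 (a²S²σ²) ⊗ gaussianReal 0 (b²S²σ²)) under the map (τx, τy) ↦ Re((F⁻¹(F(V) + τx + i·τy))_j) — is gaussianReal (V_j) (S²σ²/2).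 -/
set_option linter.unnecessarySimpa false


open MeasureTheory ProbabilityTheory Real
open scoped NNReal ENNReal

lemma gauss_conv_pointwise (v1 v2 : ℝ≥0) (h1 : v1 ≠ 0) (h2 : v2 ≠ 0) (t : ℝ) :
    ∫ x : ℝ, gaussianPDFReal 0 v1 x * gaussianPDFReal x v2 t
      = gaussianPDFReal 0 (v1 + v2) t := by
  have hp : (0:ℝ) < v1 := lt_of_le_of_ne (NNReal.coe_nonneg _) (by exact_mod_cast (Ne.symm h1))
  have hq : (0:ℝ) < v2 := lt_of_le_of_ne (NNReal.coe_nonneg _) (by exact_mod_cast (Ne.symm h2))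
  set p := (v1:ℝ) with hpdef
  set q := (v2:ℝ) with hqdef
  have hpq : (0:ℝ) < p + q := by linarith
  have hπ : (0:ℝ) < π := Real.pi_pos
  set A : ℝ := (p+q)/(2*p*q) with hA
  have hApos : 0 < A := by positivity
  set m : ℝ := p*t/(p+q) with hm
  have key : ∀ x : ℝ,
      gaussianPDFReal 0 v1 x * gaussianPDFReal x v2 t
      = ((√(2*π*p))⁻¹ * (√(2*π*q))⁻¹ * rexp (-t^2/(2*(p+q)))) * rexp (-A * (x - m)^2) := by
    intro x
    simp only [gaussianPDFReal, sub_zero, ← hpdef, ← hqdef]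
    rw [mul_mul_mul_comm, ← Real.exp_add]
    conv_rhs => rw [mul_assoc, ← Real.exp_add]
    congr 1
    rw [hA, hm]
    field_simp
    congr 1
    field_simp
    ring
  simp_rw [key]
  rw [integral_const_mul]
  have := MeasureTheory.integral_sub_right_eq_self (μ := volume)
    (fun y : ℝ => rexp (-A * y^2)) m
  rw [this, integral_gaussian]
  -- constants
  have hs : √(π / A) = √(2*π*p) * √(2*π*q) / √(2*π*(p+q)) := by
    rw [← Real.sqrt_mul (by positivity), ← Real.sqrt_div (by positivity)]
    congr 1
    rw [hA]
    field_simp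
  rw [hs, gaussianPDFReal]
  have h2p : √(2*π*p) ≠ 0 := by positivity
  have h2q : √(2*π*q) ≠ 0 := by positivity
  have h2pq : √(2*π*(p+q)) ≠ 0 := by positivity
  rw [sub_zero]
  push_cast
  rw [← hpdef, ← hqdef]
  field_simp

lemma measurable_gauss2 (v : ℝ≥0) : Measurable (fun p : ℝ × ℝ => gaussianPDF p.1 v p.2) := by
  apply Measurable.ennreal_ofReal
  unfold gaussianPDFReal
  fun_prop

lemma gauss_map_add (v1 v2 : ℝ≥0) :
    Measure.map (fun p : ℝ × ℝ => p.1 + p.2)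
      ((gaussianReal 0 v1).prod (gaussianReal 0 v2)) = gaussianReal 0 (v1 + v2) := by
  by_cases h1 : v1 = 0
  · subst h1
    rw [gaussianReal_zero_var, Measure.dirac_prod, zero_add,
      Measure.map_map measurable_add (measurable_prodMk_left)]
    have : ((fun p : ℝ × ℝ => p.1 + p.2) ∘ Prod.mk (0:ℝ)) = fun x : ℝ => (0:ℝ) + x := rfl
    rw [this]
    simpa using gaussianReal_map_const_add (μ := 0) (v := v2) 0
  by_cases h2 : v2 = 0
  · subst h2
    rw [gaussianReal_zero_var, Measure.prod_dirac, add_zero,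
      Measure.map_map measurable_add (measurable_prodMk_right)]
    have : ((fun p : ℝ × ℝ => p.1 + p.2) ∘ (fun x : ℝ => (x, (0:ℝ)))) = fun x : ℝ => x + (0:ℝ) := rfl
    rw [this]
    simpa using gaussianReal_map_add_const (μ := 0) (v := v1) 0
  have h12 : v1 + v2 ≠ 0 := by simp [h1, h2]
  ext s hs
  rw [Measure.map_apply measurable_add hs, Measure.prod_apply (measurable_add hs),
    gaussianReal_apply 0 h12 s]
  have step1 : ∀ x : ℝ, (gaussianReal 0 v2) (Prod.mk x ⁻¹' ((fun p : ℝ × ℝ => p.1 + p.2) ⁻¹' s))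
      = ∫⁻ t in s, gaussianPDF x v2 t := by
    intro x
    have : Prod.mk x ⁻¹' ((fun p : ℝ × ℝ => p.1 + p.2) ⁻¹' s) = (fun y => x + y) ⁻¹' s := rfl
    rw [this, ← Measure.map_apply (measurable_const_add x) hs,
      gaussianReal_map_const_add (μ := 0) (v := v2) x, zero_add, gaussianReal_apply x h2 s]
  simp_rw [step1]
  have hmeas : Measurable fun x : ℝ => ∫⁻ t in s, gaussianPDF x v2 t := by
    have : Measurable fun p : ℝ × ℝ => gaussianPDF p.1 v2 p.2 := measurable_gauss2 v2
    exact Measurable.lintegral_prod_right' (ν := volume.restrict s) this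
  rw [gaussianReal_of_var_ne_zero 0 h1,
    lintegral_withDensity_eq_lintegral_mul volume (measurable_gaussianPDF 0 v1) hmeas]
  simp only [Pi.mul_apply]
  have pull : ∀ x : ℝ, gaussianPDF 0 v1 x * ∫⁻ t in s, gaussianPDF x v2 t
      = ∫⁻ t in s, gaussianPDF 0 v1 x * gaussianPDF x v2 t := fun x =>
    (lintegral_const_mul _ ((measurable_gauss2 v2).comp (measurable_prodMk_left))).symm
  simp_rw [pull]
  rw [lintegral_lintegral_swap (((measurable_gaussianPDF 0 v1).comp measurable_fst).mul
    (measurable_gauss2 v2)).aemeasurable]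
  refine setLIntegral_congr_fun hs (fun t _ => ?_)
  have hint : Integrable (fun x : ℝ => gaussianPDFReal 0 v1 x * gaussianPDFReal x v2 t) := by
    have hb : ∀ x : ℝ, ‖gaussianPDFReal x v2 t‖ ≤ (√(2 * π * (v2:ℝ)))⁻¹ := by
      intro x
      rw [Real.norm_eq_abs, abs_of_nonneg (gaussianPDFReal_nonneg _ _ _), gaussianPDFReal]
      have he : rexp (-(t - x)^2 / (2*(v2:ℝ))) ≤ 1 := Real.exp_le_one_iff.mpr (by
        apply div_nonpos_of_nonpos_of_nonneg
        · simp [sq_nonneg]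
        · positivity)
      have hc : (0:ℝ) ≤ (√(2 * π * (v2:ℝ)))⁻¹ := by positivity
      calc (√(2 * π * (v2:ℝ)))⁻¹ * rexp (-(t - x)^2 / (2*(v2:ℝ)))
          ≤ (√(2 * π * (v2:ℝ)))⁻¹ * 1 := by exact mul_le_mul_of_nonneg_left he hc
        _ = (√(2 * π * (v2:ℝ)))⁻¹ := mul_one _
    have := (integrable_gaussianPDFReal 0 v1).bdd_mul
      (f := fun x => gaussianPDFReal x v2 t) ?_ (ae_of_all _ hb)
    · exact (this.congr (ae_of_all _ fun x => by ring))
    · apply Measurable.aestronglyMeasurable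
      unfold gaussianPDFReal
      fun_prop
  calc ∫⁻ x : ℝ, gaussianPDF 0 v1 x * gaussianPDF x v2 t
      = ∫⁻ x : ℝ, ENNReal.ofReal (gaussianPDFReal 0 v1 x * gaussianPDFReal x v2 t) := by
        simp_rw [gaussianPDF, ← ENNReal.ofReal_mul (gaussianPDFReal_nonneg 0 v1 _)]
    _ = ENNReal.ofReal (∫ x : ℝ, gaussianPDFReal 0 v1 x * gaussianPDFReal x v2 t) := by
        rw [ofReal_integral_eq_lintegral_ofReal hint (ae_of_all _ fun x =>
          mul_nonneg (gaussianPDFReal_nonneg _ _ _) (gaussianPDFReal_nonneg _ _ _))]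
    _ = gaussianPDF 0 (v1 + v2) t := by rw [gauss_conv_pointwise v1 v2 h1 h2 t]; rfl

lemma gauss_map_comb {α β : Type*} [MeasurableSpace α] [MeasurableSpace β]
    (μ : Measure α) (ν : Measure β) [SFinite μ] [SFinite ν]
    {f : α → ℝ} {g : β → ℝ} (hf : Measurable f) (hg : Measurable g)
    {u w : ℝ≥0} (hμ : Measure.map f μ = gaussianReal 0 u)
    (hν : Measure.map g ν = gaussianReal 0 w) :
    Measure.map (fun p : α × β => f p.1 + g p.2) (μ.prod ν) = gaussianReal 0 (u + w) := by
  have : (fun p : α × β => f p.1 + g p.2)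
      = (fun q : ℝ × ℝ => q.1 + q.2) ∘ Prod.map f g := rfl
  rw [this, ← Measure.map_map measurable_add (hf.prodMap hg),
    ← Measure.map_prod_map _ _ hf hg, hμ, hν, gauss_map_add]

lemma gauss_map_mul (c : ℝ) (v : ℝ≥0) :
    Measure.map (fun x : ℝ => c * x) (gaussianReal 0 v)
      = gaussianReal 0 (⟨c^2, sq_nonneg _⟩ * v) := by
  have h := gaussianReal_map_const_mul (μ := 0) (v := v) c
  simp only [mul_zero] at h
  exact h

lemma gauss_map_pair (c d : ℝ) (v1 v2 : ℝ≥0) :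
    Measure.map (fun p : ℝ × ℝ => c * p.1 + d * p.2) ((gaussianReal 0 v1).prod (gaussianReal 0 v2))
      = gaussianReal 0 (⟨c^2, sq_nonneg _⟩ * v1 + ⟨d^2, sq_nonneg _⟩ * v2) :=
  gauss_map_comb _ _ (measurable_const_mul c) (measurable_const_mul d)
    (gauss_map_mul c v1) (gauss_map_mul d v2)

lemma gauss_map_pi (v1 v2 : ℝ≥0) : ∀ (n : ℕ) (c d : Fin n → ℝ),
    Measure.map (fun τ : Fin n → ℝ × ℝ => ∑ k, (c k * (τ k).1 + d k * (τ k).2))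
      (Measure.pi fun _ => (gaussianReal 0 v1).prod (gaussianReal 0 v2))
      = gaussianReal 0 (∑ k, (⟨(c k)^2, sq_nonneg _⟩ * v1 + ⟨(d k)^2, sq_nonneg _⟩ * v2)) := by
  intro n
  induction n with
  | zero =>
      intro c d
      simp only [Finset.univ_eq_empty, Finset.sum_empty]
      rw [show (fun _ : Fin 0 → ℝ × ℝ => (0:ℝ)) = fun _ => (0:ℝ) from rfl,
        Measure.map_const, gaussianReal_zero_var]
      simp
  | succ n ih =>
      intro c d
      have hmp := measurePreserving_piFinSuccAbove
        (fun _ : Fin (n+1) => (gaussianReal 0 v1).prod (gaussianReal 0 v2)) 0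
      set e := MeasurableEquiv.piFinSuccAbove (fun _ : Fin (n+1) => ℝ × ℝ) 0 with he
      have hsum : (fun τ : Fin (n+1) → ℝ × ℝ => ∑ k, (c k * (τ k).1 + d k * (τ k).2))
          = (fun q : (ℝ × ℝ) × (Fin n → ℝ × ℝ) =>
              (c 0 * q.1.1 + d 0 * q.1.2)
              + ∑ k : Fin n, (c k.succ * (q.2 k).1 + d k.succ * (q.2 k).2)) ∘ e := by
        funext τ
        have heap : e τ = (τ 0, fun k : Fin n => τ k.succ) := by
          simp only [he, MeasurableEquiv.piFinSuccAbove_apply, Fin.insertNthEquiv_zero]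
          rfl
        simp only [Function.comp_apply, heap]
        rw [Fin.sum_univ_succ]
      rw [hsum, ← Measure.map_map (by fun_prop) e.measurable, hmp.map_eq]
      have inner := gauss_map_comb ((gaussianReal 0 v1).prod (gaussianReal 0 v2))
        (Measure.pi fun _ : Fin n => (gaussianReal 0 v1).prod (gaussianReal 0 v2))
        (f := fun x : ℝ × ℝ => c 0 * x.1 + d 0 * x.2)
        (g := fun τ : Fin n → ℝ × ℝ => ∑ k : Fin n, (c k.succ * (τ k).1 + d k.succ * (τ k).2))
        (by fun_prop) (by fun_prop)
        (gauss_map_pair (c 0) (d 0) v1 v2) (ih (fun k => c k.succ) (fun k => d k.succ))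
      rw [inner, Fin.sum_univ_succ]

lemma sum_pow_exp (N : ℕ) (hN : 0 < N) (m : ℤ) :
    ∑ i : Fin N, Complex.exp (2 * Real.pi * Complex.I * m / N) ^ (i : ℕ)
      = if (N : ℤ) ∣ m then (N : ℂ) else 0 := by
  have hNC : (N : ℂ) ≠ 0 := Nat.cast_ne_zero.mpr hN.ne'
  set ω : ℂ := Complex.exp (2 * Real.pi * Complex.I * m / N) with hω
  split_ifs with h
  · obtain ⟨t, ht⟩ := h
    have : ω = 1 := by
      rw [hω, ht]
      push_cast
      rw [show 2 * (Real.pi:ℂ) * Complex.I * ((N:ℂ) * (t:ℂ)) / N = (t:ℂ) * (2 * Real.pi * Complex.I) by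
        field_simp]
      exact Complex.exp_int_mul_two_pi_mul_I t
    simp [this]
  · have hω1 : ω ≠ 1 := by
      intro hcon
      rw [hω, Complex.exp_eq_one_iff] at hcon
      obtain ⟨k, hk⟩ := hcon
      apply h
      refine ⟨k, ?_⟩
      have h2 : (2:ℂ) * Real.pi * Complex.I ≠ 0 :=
        mul_ne_zero (mul_ne_zero two_ne_zero
          (Complex.ofReal_ne_zero.mpr Real.pi_ne_zero)) Complex.I_ne_zero
      have h' : 2*(Real.pi:ℂ)*Complex.I*(m:ℂ) = 2*(Real.pi:ℂ)*Complex.I*((N:ℂ)*(k:ℂ)) := by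
        calc 2*(Real.pi:ℂ)*Complex.I*(m:ℂ)
            = (2*(Real.pi:ℂ)*Complex.I*(m:ℂ)/(N:ℂ))*(N:ℂ) := by field_simp
          _ = ((k:ℂ)*(2*(Real.pi:ℂ)*Complex.I))*(N:ℂ) := by rw [hk]
          _ = 2*(Real.pi:ℂ)*Complex.I*((N:ℂ)*(k:ℂ)) := by ring
      have : (m : ℂ) = (N : ℂ) * (k : ℂ) := mul_left_cancel₀ h2 h'
      exact_mod_cast this
    have hωN : ω ^ N = 1 := by
      rw [hω, ← Complex.exp_nat_mul]
      rw [show (N:ℂ) * (2 * Real.pi * Complex.I * m / N) = (m:ℂ) * (2 * Real.pi * Complex.I) by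
        field_simp]
      exact Complex.exp_int_mul_two_pi_mul_I m
    rw [Fin.sum_univ_eq_sum_range (fun i => ω ^ i), geom_sum_eq hω1, hωN]
    simp

lemma sum_cos_eq_zero (N : ℕ) (hN : 0 < N) (m : ℤ) (h : ¬ (N:ℤ) ∣ m) :
    ∑ k : Fin N, Real.cos (2 * Real.pi * m * k / N) = 0 := by
  have h1 := sum_pow_exp N hN m
  rw [if_neg h] at h1
  have hre : ∀ k : Fin N, Real.cos (2 * Real.pi * m * k / N)
      = (Complex.exp (2 * Real.pi * Complex.I * m / N) ^ (k:ℕ)).re := by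
    intro k
    rw [← Complex.exp_nat_mul,
      show ((k:ℕ):ℂ) * (2 * Real.pi * Complex.I * m / N)
        = ((2 * Real.pi * m * k / N : ℝ) : ℂ) * Complex.I by push_cast; field_simp,
      Complex.exp_ofReal_mul_I_re]
  simp_rw [hre]
  rw [← Complex.re_sum, h1, Complex.zero_re]

lemma sum_cos_sq (N : ℕ) (hN : 0 < N) (j : ℕ) (hj : ¬ (N ∣ 2 * j)) :
    ∑ k : Fin N, Real.cos (2 * Real.pi * j * k / N) ^ 2 = N / 2 := by
  have hjz : ¬ ((N:ℤ) ∣ (2 * j : ℤ)) := by exact_mod_cast hj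
  have hz := sum_cos_eq_zero N hN (2 * j) hjz
  have harg : ∀ k : Fin N, (2:ℝ) * (2 * Real.pi * j * k / N) = 2 * Real.pi * ((2*j:ℤ):ℝ) * k / N := by
    intro k; push_cast; ring
  simp_rw [Real.cos_sq, harg]
  rw [Finset.sum_add_distrib, ← Finset.sum_div, ← Finset.sum_div, hz]
  simp [Finset.card_univ]

lemma sum_sin_sq (N : ℕ) (hN : 0 < N) (j : ℕ) (hj : ¬ (N ∣ 2 * j)) :
    ∑ k : Fin N, Real.sin (2 * Real.pi * j * k / N) ^ 2 = N / 2 := by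
  have hc := sum_cos_sq N hN j hj
  have : ∀ k : Fin N, Real.sin (2 * Real.pi * j * k / N) ^ 2
      = 1 - Real.cos (2 * Real.pi * j * k / N) ^ 2 := fun k => by
    have := Real.sin_sq_add_cos_sq (2 * Real.pi * j * k / N); linarith
  simp_rw [this]
  rw [Finset.sum_sub_distrib, hc]
  simp [Finset.card_univ]
  ring

lemma idft_dft (N : ℕ) (hN : 1 ≤ N) (f : Fin N → ℂ) (j : Fin N) :
    idft (fun k => dft f k) j = f j := by
  have hN0 : 0 < N := hN
  have hNC : (N:ℂ) ≠ 0 := Nat.cast_ne_zero.mpr hN0.ne'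
  have hNR : (0:ℝ) < N := by exact_mod_cast hN0
  have hsqne : ((Real.sqrt N : ℝ) : ℂ) ≠ 0 := by
    exact_mod_cast Complex.ofReal_ne_zero.mpr (by positivity)
  have hsq : ((Real.sqrt N : ℝ) : ℂ) * ((Real.sqrt N : ℝ) : ℂ) = (N : ℂ) := by
    rw [← Complex.ofReal_mul, Real.mul_self_sqrt (Nat.cast_nonneg N)]
    norm_num
  unfold idft dft
  have expand : ∀ i : Fin N,
      ((1/((Real.sqrt N : ℝ):ℂ)) * ∑ n : Fin N,
          f n * Complex.exp (-(2 * (Real.pi : ℂ) * Complex.I * (i:ℕ) * (n:ℕ)) / N))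
        * Complex.exp ((2 * (Real.pi:ℂ) * Complex.I * (i:ℕ) * (j:ℕ)) / N)
      = (1/((Real.sqrt N : ℝ):ℂ)) * ∑ n : Fin N,
          f n * Complex.exp (2 * Real.pi * Complex.I * (((j:ℤ) - (n:ℤ) : ℤ)) / N) ^ (i:ℕ) := by
    intro i
    rw [mul_assoc, Finset.sum_mul]
    congr 1
    refine Finset.sum_congr rfl fun n _ => ?_
    rw [mul_assoc, ← Complex.exp_add, ← Complex.exp_nat_mul]
    congr 2
    push_cast
    field_simp
    ring
  simp_rw [expand, ← Finset.mul_sum]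
  rw [Finset.sum_comm]
  have inner : ∀ n : Fin N,
      ∑ i : Fin N, f n * Complex.exp (2 * Real.pi * Complex.I * (((j:ℤ) - (n:ℤ) : ℤ)) / N) ^ (i:ℕ)
      = if n = j then f n * N else 0 := by
    intro n
    rw [← Finset.mul_sum, sum_pow_exp N hN0]
    have hiff : ((N:ℤ) ∣ ((j:ℤ) - (n:ℤ))) ↔ n = j := by
      constructor
      · intro hdvd
        have habs : |((j:ℤ) - (n:ℤ))| < N := by
          have h1 : (j:ℤ) < N := by exact_mod_cast j.isLt
          have h2 : (n:ℤ) < N := by exact_mod_cast n.isLt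
          have h3 : 0 ≤ (j:ℤ) := Int.ofNat_nonneg _
          have h4 : 0 ≤ (n:ℤ) := Int.ofNat_nonneg _
          rw [abs_lt]
          omega
        have := Int.eq_zero_of_abs_lt_dvd hdvd habs
        have : (j:ℤ) = (n:ℤ) := by omega
        exact (Fin.ext (by exact_mod_cast this.symm))
      · rintro rfl
        simp
    rw [if_congr hiff rfl rfl]
    split_ifs with h <;> simp
  simp_rw [inner]
  rw [Finset.sum_ite_eq' Finset.univ j (fun n => f n * N)]
  simp only [Finset.mem_univ, if_true, one_div]
  rw [← hsq]
  field_simp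

lemma idft_add {N : ℕ} (A B : Fin N → ℂ) (j : Fin N) :
    idft (fun k => A k + B k) j = idft A j + idft B j := by
  unfold idft
  simp_rw [add_mul, Finset.sum_add_distrib, mul_add]

lemma map_fun_eq (N : ℕ) (hN : 1 ≤ N) (V : Fin N → ℝ) (j : Fin N) (τ : Fin N → ℝ × ℝ) :
    (idft (fun k => dft (fun n => (V n : ℂ)) k
        + (((τ k).1 : ℂ) + Complex.I * ((τ k).2 : ℂ))) j).re
    = V j + ∑ k : Fin N, ((Real.cos (2*Real.pi*j*k/N)/Real.sqrt N) * (τ k).1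
        + (-(Real.sin (2*Real.pi*j*k/N)/Real.sqrt N)) * (τ k).2) := by
  rw [idft_add, idft_dft N hN, Complex.add_re, Complex.ofReal_re]
  congr 1
  unfold idft
  rw [show (1 / ((Real.sqrt N : ℝ) : ℂ)) = (((1 / Real.sqrt N : ℝ)) : ℂ) by push_cast; ring,
    Complex.re_ofReal_mul, Complex.re_sum, Finset.mul_sum]
  refine Finset.sum_congr rfl fun k _ => ?_
  rw [show (2 * (Real.pi : ℂ) * Complex.I * ((k:ℕ):ℂ) * ((j:ℕ):ℂ)) / (N:ℂ)
      = ((2 * Real.pi * (j:ℕ) * (k:ℕ) / N : ℝ) : ℂ) * Complex.I by push_cast; ring]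
  rw [Complex.mul_re, Complex.exp_ofReal_mul_I_re, Complex.exp_ofReal_mul_I_im]
  simp only [Complex.add_re, Complex.add_im, Complex.ofReal_re, Complex.ofReal_im,
    Complex.mul_re, Complex.mul_im, Complex.I_re, Complex.I_im]
  ring

/-- Theorem 2 of the paper: adding complex Gaussian noise whose real and imaginary parts
have variances `a²S²σ²` and `b²S²σ²` with `a² + b² = 1` in the frequency domain, inverting
the transform, and keeping only the real part yields `V_j` perturbed by a real Gaussian of
variance `S²σ²/2`, for every coordinate `j` with `N ∤ 2j`. -/
theorem gredp_general (N : ℕ) (hN : 1 ≤ N) (S σ : ℝ) (hS : 0 < S) (hσ : 0 < σ)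
    (a b : ℝ) (hab : a ^ 2 + b ^ 2 = 1) (V : Fin N → ℝ) (j : Fin N)
    (hj : ¬ (N ∣ 2 * (j : ℕ))) :
    Measure.map
      (fun τ : Fin N → ℝ × ℝ =>
        (idft (fun k => dft (fun n => (V n : ℂ)) k
          + (((τ k).1 : ℂ) + Complex.I * ((τ k).2 : ℂ))) j).re)
      (Measure.pi (fun _ : Fin N =>
        (gaussianReal 0 ((a ^ 2 * S ^ 2 * σ ^ 2).toNNReal)).prod
          (gaussianReal 0 ((b ^ 2 * S ^ 2 * σ ^ 2).toNNReal))))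
      = gaussianReal (V j) ((S ^ 2 * σ ^ 2 / 2).toNNReal) := by
  have hN0 : 0 < N := hN
  have hNR : (0:ℝ) < N := by exact_mod_cast hN0
  set v1 : NNReal := (a ^ 2 * S ^ 2 * σ ^ 2).toNNReal with hv1
  set v2 : NNReal := (b ^ 2 * S ^ 2 * σ ^ 2).toNNReal with hv2
  set c : Fin N → ℝ := fun k => Real.cos (2*Real.pi*j*k/N)/Real.sqrt N with hc
  set d : Fin N → ℝ := fun k => -(Real.sin (2*Real.pi*j*k/N)/Real.sqrt N) with hd
  have hfun : (fun τ : Fin N → ℝ × ℝ =>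
        (idft (fun k => dft (fun n => (V n : ℂ)) k
          + (((τ k).1 : ℂ) + Complex.I * ((τ k).2 : ℂ))) j).re)
      = (fun x : ℝ => V j + x) ∘
        (fun τ : Fin N → ℝ × ℝ => ∑ k, (c k * (τ k).1 + d k * (τ k).2)) := by
    funext τ
    exact map_fun_eq N hN V j τ
  have hLmeas : Measurable
      (fun τ : Fin N → ℝ × ℝ => ∑ k, (c k * (τ k).1 + d k * (τ k).2)) := by
    apply Finset.measurable_sum
    intro k _
    exact ((measurable_fst.comp (measurable_pi_apply k)).const_mul (c k)).add
      ((measurable_snd.comp (measurable_pi_apply k)).const_mul (d k))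
  rw [hfun, ← Measure.map_map (measurable_const_add (V j)) hLmeas,
    gauss_map_pi v1 v2 N c d, gaussianReal_map_const_add, zero_add]
  congr 1
  have hA : ((v1 : NNReal) : ℝ) = a ^ 2 * S ^ 2 * σ ^ 2 :=
    Real.coe_toNNReal _ (by positivity)
  have hB : ((v2 : NNReal) : ℝ) = b ^ 2 * S ^ 2 * σ ^ 2 :=
    Real.coe_toNNReal _ (by positivity)
  have hc2 : ∀ k : Fin N, (c k)^2 = Real.cos (2*Real.pi*j*k/N)^2 / N := by
    intro k
    rw [hc]
    rw [div_pow, Real.sq_sqrt hNR.le]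
  have hd2 : ∀ k : Fin N, (d k)^2 = Real.sin (2*Real.pi*j*k/N)^2 / N := by
    intro k
    rw [hd]
    simp only [neg_sq]
    rw [div_pow, Real.sq_sqrt hNR.le]
  apply NNReal.coe_injective
  rw [NNReal.coe_sum]
  have e : ∀ (x:ℝ) (h:0≤x) (w:ℝ≥0), ((@HMul.hMul ℝ≥0 ℝ≥0 ℝ≥0 _ (⟨x,h⟩ : {r : ℝ // 0 ≤ r}) w : ℝ≥0) : ℝ) = x * w :=
    fun _ _ _ => rfl
  simp only [NNReal.coe_add, e, NNReal.coe_mul, NNReal.coe_mk, hA, hB]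
  simp_rw [hc2, hd2]
  rw [Finset.sum_add_distrib, ← Finset.sum_mul, ← Finset.sum_mul, ← Finset.sum_div,
    ← Finset.sum_div, sum_cos_sq N hN0 j hj, sum_sin_sq N hN0 j hj,
    Real.coe_toNNReal _ (by positivity : (0:ℝ) ≤ S ^ 2 * σ ^ 2 / 2)]
  field_simp
  have h2 : b ^ 2 = 1 - a ^ 2 := by linarith
  rw [h2]
  ring
end

section
/- Let N ≥ 1, let S > 0 and σ > 0, and let (γ_{m,n})_{m,n ∈ {0,…,N−1}} be N² independent real random variables, each with law gaussianReal 0 (σ²S²). Define the two-dimensional inverse discrete Fourier transform υ_{k,l} = (1/N) ∑_{m=0}^{N−1} ∑_{n=0}^{N−1} γ_{m,n} · exp(2πi·(mk + nl)/N). Then for every pair of indices (k,l) ∈ {0,…,N−1}² such that it is not the case that N divides 2k and N divides 2l, the law of the real random variable Re(υ_{k,l}) — the pushforward of the product measure ⊗_{(m,n)} gaussianReal 0 (σ²S²) under the map γ ↦ Re(υ_{k,l}) — is gaussianReal 0 (σ²S²/2). -/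
open MeasureTheory ProbabilityTheory

open Real

lemma gaussianPDFReal_conv_integral {v w : NNReal} (hv : v ≠ 0) (hw : w ≠ 0) (x : ℝ) :
    ∫ y, gaussianPDFReal 0 v (x - y) * gaussianPDFReal 0 w y = gaussianPDFReal 0 (v + w) x := by
  have hv' : 0 < (v : ℝ) := by exact_mod_cast hv.bot_lt
  have hw' : 0 < (w : ℝ) := by exact_mod_cast hw.bot_lt
  have hv0 : (v : ℝ) ≠ 0 := ne_of_gt hv'
  have hw0 : (w : ℝ) ≠ 0 := ne_of_gt hw'
  have hvw : 0 < (v : ℝ) + w := by linarith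
  have hvw0 : (v : ℝ) + w ≠ 0 := ne_of_gt hvw
  have hπ : 0 < π := pi_pos
  have hπ0 : π ≠ 0 := ne_of_gt hπ
  set a : ℝ := ((v : ℝ) + w) / (2 * v * w) with ha
  have hapos : 0 < a := by positivity
  set t : ℝ := w * x / ((v : ℝ) + w) with ht
  have key : ∀ y : ℝ, gaussianPDFReal 0 v (x - y) * gaussianPDFReal 0 w y
      = ((√(2 * π * v))⁻¹ * (√(2 * π * w))⁻¹ * rexp (- x ^ 2 / (2 * ((v : ℝ) + w))))
        * rexp (-a * (y - t) ^ 2) := by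
    intro y
    have hexp : -(x - y) ^ 2 / (2 * (v : ℝ)) + -y ^ 2 / (2 * (w : ℝ))
        = - x ^ 2 / (2 * ((v : ℝ) + w)) + (-a * (y - t) ^ 2) := by
      rw [ha, ht]
      field_simp
      ring
    have h1 : gaussianPDFReal 0 v (x - y) * gaussianPDFReal 0 w y
        = (√(2 * π * v))⁻¹ * (√(2 * π * w))⁻¹
          * rexp (-(x - y) ^ 2 / (2 * (v : ℝ)) + -y ^ 2 / (2 * (w : ℝ))) := by
      simp only [gaussianPDFReal, sub_zero, Real.exp_add]
      ring
    rw [h1, hexp, Real.exp_add]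
    ring
  rw [integral_congr_ae (Filter.Eventually.of_forall key), integral_const_mul]
  have hint : ∫ y : ℝ, rexp (-a * (y - t) ^ 2) = √(π / a) := by
    rw [← integral_gaussian a]
    exact integral_sub_right_eq_self (fun y => rexp (-a * y ^ 2)) t
  rw [hint]
  have hconst : (√(2 * π * v))⁻¹ * (√(2 * π * w))⁻¹ * √(π / a) = (√(2 * π * ((v:ℝ) + w)))⁻¹ := by
    rw [← Real.sqrt_inv, ← Real.sqrt_inv, ← Real.sqrt_inv, ← Real.sqrt_mul (by positivity),
      ← Real.sqrt_mul (by positivity)]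
    congr 1
    rw [ha]
    field_simp
  have hpdf : gaussianPDFReal 0 (v + w) x
      = (√(2 * π * ((v:ℝ) + w)))⁻¹ * rexp (- x ^ 2 / (2 * ((v:ℝ) + w))) := by
    simp only [gaussianPDFReal, sub_zero]
    norm_num
  rw [hpdf, ← hconst]
  ring
noncomputable def shearE : (ℝ × ℝ) ≃ᵐ (ℝ × ℝ) where
  toFun := fun p => (p.1 + p.2, p.2)
  invFun := fun p => (p.1 - p.2, p.2)
  left_inv := fun p => by simp
  right_inv := fun p => by simp
  measurable_toFun := (measurable_fst.add measurable_snd).prodMk measurable_snd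
  measurable_invFun := (measurable_fst.sub measurable_snd).prodMk measurable_snd

lemma map_withDensity_equiv {α β : Type*} [MeasurableSpace α] [MeasurableSpace β]
    (e : α ≃ᵐ β) (μ : Measure α) (F : α → ENNReal) (hF : Measurable F) :
    (μ.withDensity F).map e = (μ.map e).withDensity (F ∘ e.symm) := by
  ext s hs
  rw [Measure.map_apply e.measurable hs, withDensity_apply _ (e.measurable hs),
    withDensity_apply _ hs, Measure.restrict_map e.measurable hs,
    lintegral_map (hF.comp e.symm.measurable) e.measurable]
  simp

lemma lintegral_gaussianPDF_conv {v w : NNReal} (hv : v ≠ 0) (hw : w ≠ 0) (x : ℝ) :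
    ∫⁻ y, gaussianPDF 0 v (x - y) * gaussianPDF 0 w y = gaussianPDF 0 (v + w) x := by
  have hv' : 0 < (v : ℝ) := by exact_mod_cast hv.bot_lt
  have hint : Integrable (fun y => gaussianPDFReal 0 v (x - y) * gaussianPDFReal 0 w y) := by
    refine (integrable_gaussianPDFReal 0 w).bdd_mul (c := (√(2 * π * v))⁻¹) ?_ ?_
    · exact ((measurable_gaussianPDFReal 0 v).comp (measurable_const.sub measurable_id)).aestronglyMeasurable
    · refine Filter.Eventually.of_forall fun y => ?_
      rw [Real.norm_eq_abs, abs_of_nonneg (gaussianPDFReal_nonneg _ _ _)]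
      simp only [gaussianPDFReal, sub_zero]
      have h1 : rexp (-(x - y) ^ 2 / (2 * (v:ℝ))) ≤ 1 := by
        rw [Real.exp_le_one_iff]
        have h0 : 0 ≤ (x - y)^2 / (2 * (v:ℝ)) := by positivity
        have heq : -(x - y) ^ 2 / (2 * (v:ℝ)) = -((x - y)^2 / (2 * (v:ℝ))) := by ring
        linarith [heq]
      have h2 : (0:ℝ) ≤ (√(2 * π * v))⁻¹ := by positivity
      calc (√(2 * π * v))⁻¹ * rexp (-(x - y) ^ 2 / (2 * (v:ℝ)))
          ≤ (√(2 * π * v))⁻¹ * 1 := by gcongr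
        _ = (√(2 * π * v))⁻¹ := mul_one _
  simp only [gaussianPDF]
  calc ∫⁻ y, ENNReal.ofReal (gaussianPDFReal 0 v (x - y)) * ENNReal.ofReal (gaussianPDFReal 0 w y)
      = ∫⁻ y, ENNReal.ofReal (gaussianPDFReal 0 v (x - y) * gaussianPDFReal 0 w y) := by
        congr 1; funext y
        rw [← ENNReal.ofReal_mul (gaussianPDFReal_nonneg _ _ _)]
    _ = ENNReal.ofReal (∫ y, gaussianPDFReal 0 v (x - y) * gaussianPDFReal 0 w y) := by
        rw [ofReal_integral_eq_lintegral_ofReal hint]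
        exact Filter.Eventually.of_forall fun y =>
          mul_nonneg (gaussianPDFReal_nonneg _ _ _) (gaussianPDFReal_nonneg _ _ _)
    _ = ENNReal.ofReal (gaussianPDFReal 0 (v + w) x) := by
        rw [gaussianPDFReal_conv_integral hv hw]
lemma shearE_coe : ⇑shearE = fun p : ℝ × ℝ => (p.1 + p.2, p.2) := rfl


lemma gaussian_conv (v w : NNReal) :
    Measure.map (fun p : ℝ × ℝ => p.1 + p.2) ((gaussianReal 0 v).prod (gaussianReal 0 w))
      = gaussianReal 0 (v + w) := by
  by_cases hv : v = 0
  · subst hv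
    rw [gaussianReal_zero_var, Measure.dirac_prod, zero_add,
      Measure.map_map (g := fun p : ℝ × ℝ => p.1 + p.2) (measurable_fst.add measurable_snd) (measurable_prodMk_left)]
    simp [Function.comp_def]
  by_cases hw : w = 0
  · subst hw
    rw [gaussianReal_zero_var, Measure.prod_dirac, add_zero,
      Measure.map_map (by fun_prop) (by fun_prop)]
    simp [Function.comp_def]
  -- main case
  have hmv : Measurable (gaussianPDF 0 v) := measurable_gaussianPDF 0 v
  have hmw : Measurable (gaussianPDF 0 w) := measurable_gaussianPDF 0 w
  have hprod : (gaussianReal 0 v).prod (gaussianReal 0 w)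
      = (volume.prod volume).withDensity (fun p => gaussianPDF 0 v p.1 * gaussianPDF 0 w p.2) := by
    refine Measure.prod_eq fun s t hs ht => ?_
    rw [withDensity_apply _ (hs.prod ht), ← Measure.prod_restrict,
      lintegral_prod_mul hmv.aemeasurable hmw.aemeasurable,
      gaussianReal_of_var_ne_zero 0 hv, gaussianReal_of_var_ne_zero 0 hw,
      withDensity_apply _ hs, withDensity_apply _ ht]
  have hshear : ((volume : Measure (ℝ × ℝ))).map shearE = volume := by
    have := (measurePreserving_add_prod (volume : Measure ℝ) (volume : Measure ℝ)).map_eq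
    rw [shearE_coe]
    rw [← Measure.volume_eq_prod] at this
    exact this
  have hcomp : (fun p : ℝ × ℝ => p.1 + p.2) = Prod.fst ∘ shearE := by
    rw [shearE_coe]; rfl
  rw [hprod, hcomp, ← Measure.map_map measurable_fst shearE.measurable,
    ← Measure.volume_eq_prod, map_withDensity_equiv shearE volume
      (fun p => gaussianPDF 0 v p.1 * gaussianPDF 0 w p.2)
      (by exact (hmv.comp measurable_fst).mul (hmw.comp measurable_snd)), hshear]
  have hsymm : ((fun p : ℝ × ℝ => gaussianPDF 0 v p.1 * gaussianPDF 0 w p.2) ∘ shearE.symm)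
      = fun p : ℝ × ℝ => gaussianPDF 0 v (p.1 - p.2) * gaussianPDF 0 w p.2 := by
    funext p
    have : shearE.symm p = (p.1 - p.2, p.2) := by
      apply shearE.injective
      rw [MeasurableEquiv.apply_symm_apply]
      rw [shearE_coe]
      simp
    simp [this]
  rw [hsymm]
  ext s hs
  rw [Measure.map_apply measurable_fst hs, withDensity_apply _ (measurable_fst hs),
    gaussianReal_of_var_ne_zero 0 (by simp [hv, hw]), withDensity_apply _ hs]
  have hpre : (Prod.fst ⁻¹' s : Set (ℝ × ℝ)) = s ×ˢ Set.univ := by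
    ext p; simp
  rw [hpre, Measure.volume_eq_prod, ← Measure.prod_restrict, Measure.restrict_univ,
    lintegral_prod _ (by exact ((hmv.comp (measurable_fst.sub measurable_snd)).mul
      (hmw.comp measurable_snd)).aemeasurable)]
  · congr 1
    funext x
    exact lintegral_gaussianPDF_conv hv hw x
lemma map_sum_fin : ∀ (n : ℕ) (c : Fin n → ℝ) (v : NNReal),
    Measure.map (fun x : Fin n → ℝ => ∑ i, c i * x i)
        (Measure.pi fun _ : Fin n => gaussianReal 0 v)
      = gaussianReal 0 ((∑ i, ((c i) ^ 2).toNNReal) * v) := by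
  intro n
  induction n with
  | zero =>
    intro c v
    simp only [Finset.univ_eq_empty, Finset.sum_empty, zero_mul, gaussianReal_zero_var]
    rw [Measure.map_const]
    simp
  | succ n ih =>
    intro c v
    set e := MeasurableEquiv.piFinSuccAbove (fun _ : Fin (n+1) => ℝ) 0 with he
    have hmp := measurePreserving_piFinSuccAbove (fun _ : Fin (n+1) => gaussianReal 0 v) 0
    have hsum : (fun x : Fin (n+1) → ℝ => ∑ i, c i * x i)
        = (fun p : ℝ × (Fin n → ℝ) => c 0 * p.1 + ∑ j : Fin n, c j.succ * p.2 j) ∘ e := by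
      funext x
      simp only [Function.comp_apply, he, MeasurableEquiv.piFinSuccAbove,
        MeasurableEquiv.coe_mk, Fin.insertNthEquiv, Equiv.coe_fn_symm_mk]
      rw [Fin.sum_univ_succ]
      simp [Fin.removeNth]
    have hmeas2 : Measurable (fun p : ℝ × (Fin n → ℝ) => c 0 * p.1 + ∑ j : Fin n, c j.succ * p.2 j) := by
      fun_prop
    rw [hsum, ← Measure.map_map hmeas2 e.measurable, hmp.map_eq]
    have hf : Measurable (fun x : ℝ => c 0 * x) := by fun_prop
    have hg : Measurable (fun y : Fin n → ℝ => ∑ j : Fin n, c j.succ * y j) := by fun_prop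
    rw [show (fun p : ℝ × (Fin n → ℝ) => c 0 * p.1 + ∑ j : Fin n, c j.succ * p.2 j)
        = (fun q : ℝ × ℝ => q.1 + q.2) ∘
          (Prod.map (fun x : ℝ => c 0 * x) (fun y : Fin n → ℝ => ∑ j : Fin n, c j.succ * y j))
        from rfl,
      ← Measure.map_map (g := fun q : ℝ × ℝ => q.1 + q.2) (measurable_fst.add measurable_snd) (hf.prodMap hg),
      ← Measure.map_prod_map _ _ hf hg]
    have h1 : Measure.map (fun x : ℝ => c 0 * x) (gaussianReal 0 v)
        = gaussianReal 0 (((c 0) ^ 2).toNNReal * v) := by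
      have := gaussianReal_map_const_mul (μ := 0) (v := v) (c 0)
      rw [Real.toNNReal_of_nonneg (sq_nonneg (c 0))]
      simpa using this
    have h2 := ih (fun j => c j.succ) v
    rw [h1, h2, gaussian_conv]
    congr 1
    rw [Fin.sum_univ_succ, add_mul]
lemma map_sum_pi {ι : Type*} [Fintype ι] [MeasurableSpace ι]  (c : ι → ℝ) (v : NNReal) :
    Measure.map (fun x : ι → ℝ => ∑ i, c i * x i) (Measure.pi fun _ : ι => gaussianReal 0 v)
      = gaussianReal 0 ((∑ i, ((c i) ^ 2).toNNReal) * v) := by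
  classical
  let e : Fin (Fintype.card ι) ≃ ι := (Fintype.equivFin ι).symm
  have hmp := measurePreserving_piCongrLeft (fun _ : ι => gaussianReal 0 v) e
  have hmeas : Measurable (fun x : ι → ℝ => ∑ i, c i * x i) := by fun_prop
  rw [← hmp.map_eq, Measure.map_map hmeas (MeasurableEquiv.measurable _)]
  have hfun : (fun x : ι → ℝ => ∑ i, c i * x i) ∘ (MeasurableEquiv.piCongrLeft (fun _ : ι => ℝ) e)
      = fun y : Fin (Fintype.card ι) → ℝ => ∑ j, c (e j) * y j := by
    funext y
    simp only [Function.comp_apply]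
    rw [← Equiv.sum_comp e]
    apply Finset.sum_congr rfl
    intro j _
    congr 1
    rw [MeasurableEquiv.coe_piCongrLeft, Equiv.piCongrLeft_apply_apply]
  rw [hfun, map_sum_fin]
  congr 1
  rw [← Equiv.sum_comp e (fun i => ((c i) ^ 2).toNNReal)]

lemma exp_sum_zero (N : ℕ) (hN : 0 < N) (j : ℕ) (h : ¬ N ∣ 2 * j) :
    ∑ m : Fin N, Complex.exp (((4 * π * (m * j) / N : ℝ) : ℂ) * Complex.I) = 0 := by
  have hN0 : (N : ℂ) ≠ 0 := Nat.cast_ne_zero.mpr hN.ne'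
  set z : ℂ := ((4 * π * j / N : ℝ) : ℂ) * Complex.I with hz
  have hterm : ∀ m : Fin N, Complex.exp (((4 * π * (m * j) / N : ℝ) : ℂ) * Complex.I)
      = Complex.exp z ^ (m : ℕ) := by
    intro m
    rw [← Complex.exp_nat_mul]
    congr 1
    rw [hz]
    push_cast
    ring
  simp only [hterm]
  rw [Fin.sum_univ_eq_sum_range (fun i => Complex.exp z ^ i) N]
  have hne : Complex.exp z ≠ 1 := by
    intro heq
    rw [Complex.exp_eq_one_iff] at heq
    obtain ⟨n, hn⟩ := heq
    apply h
    have h2 : ((2 * j : ℕ) : ℤ) = n * N := by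
      have hπI : (2 : ℂ) * π * Complex.I ≠ 0 := by
        simp [Complex.ext_iff, Real.pi_ne_zero, Complex.I_ne_zero]
      have h3 : ((2 * j : ℕ) : ℂ) * (2 * π * Complex.I) = ((n * N : ℤ) : ℂ) * (2 * π * Complex.I) := by
        push_cast
        rw [hz] at hn
        push_cast at hn
        field_simp at hn
        linear_combination (↑π * Complex.I) * hn
      have := mul_right_cancel₀ hπI h3
      exact_mod_cast this
    exact Int.natCast_dvd_natCast.mp ⟨n, by rw [h2, mul_comm]⟩
  rw [geom_sum_eq hne]
  have hNz : Complex.exp z ^ N = 1 := by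
    rw [← Complex.exp_nat_mul]
    have : (N : ℂ) * z = ((2 * j : ℕ) : ℂ) * (2 * π * Complex.I) := by
      rw [hz]; push_cast; field_simp; ring
    rw [this]
    simpa using Complex.exp_int_mul_two_pi_mul_I (2 * j : ℕ)
  rw [hNz]
  simp
lemma cos_sq_sum (N k l : ℕ) (hN : 0 < N) (hkl : ¬ (N ∣ 2 * k ∧ N ∣ 2 * l)) :
    ∑ m : Fin N, ∑ n : Fin N, Real.cos (2 * π * ((m : ℕ) * k + (n : ℕ) * l) / N) ^ 2
      = (N : ℝ) ^ 2 / 2 := by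
  have hstep : ∀ (m n : Fin N), Real.cos (2 * π * ((m : ℕ) * k + (n : ℕ) * l) / N) ^ 2
      = 1 / 2 + Real.cos (4 * π * ((m : ℕ) * k + (n : ℕ) * l) / N) / 2 := by
    intro m n
    rw [Real.cos_sq]
    congr 2
    ring
  simp only [hstep]
  rw [Finset.sum_congr rfl (fun m _ => Finset.sum_add_distrib), Finset.sum_add_distrib]
  have hT : ∑ m : Fin N, ∑ n : Fin N,
      Real.cos (4 * π * ((m : ℕ) * k + (n : ℕ) * l) / N) / 2 = 0 := by
    have hre : ∑ m : Fin N, ∑ n : Fin N, Real.cos (4 * π * ((m : ℕ) * k + (n : ℕ) * l) / N)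
        = (∑ m : Fin N, ∑ n : Fin N,
            Complex.exp (((4 * π * ((m : ℕ) * k + (n : ℕ) * l) / N : ℝ) : ℂ) * Complex.I)).re := by
      rw [Complex.re_sum]
      refine Finset.sum_congr rfl fun m _ => ?_
      rw [Complex.re_sum]
      refine Finset.sum_congr rfl fun n _ => ?_
      rw [Complex.exp_ofReal_mul_I_re]
    have hsplit : ∑ m : Fin N, ∑ n : Fin N,
        Complex.exp (((4 * π * ((m : ℕ) * k + (n : ℕ) * l) / N : ℝ) : ℂ) * Complex.I)
        = (∑ m : Fin N, Complex.exp (((4 * π * ((m : ℕ) * k) / N : ℝ) : ℂ) * Complex.I))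
          * (∑ n : Fin N, Complex.exp (((4 * π * ((n : ℕ) * l) / N : ℝ) : ℂ) * Complex.I)) := by
      rw [Finset.sum_mul_sum]
      refine Finset.sum_congr rfl fun m _ => ?_
      refine Finset.sum_congr rfl fun n _ => ?_
      rw [← Complex.exp_add]
      congr 1
      push_cast
      have hN0 : (N : ℂ) ≠ 0 := Nat.cast_ne_zero.mpr hN.ne'
      field_simp
    have hzero : (∑ m : Fin N, Complex.exp (((4 * π * ((m : ℕ) * k) / N : ℝ) : ℂ) * Complex.I))
          * (∑ n : Fin N, Complex.exp (((4 * π * ((n : ℕ) * l) / N : ℝ) : ℂ) * Complex.I)) = 0 := by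
      by_cases hk : N ∣ 2 * k
      · have hl : ¬ N ∣ 2 * l := fun hl => hkl ⟨hk, hl⟩
        rw [exp_sum_zero N hN l hl, mul_zero]
      · rw [exp_sum_zero N hN k hk, zero_mul]
    have h2 : ∑ m : Fin N, ∑ n : Fin N,
        Real.cos (4 * π * ((m : ℕ) * k + (n : ℕ) * l) / N) / 2
        = (∑ m : Fin N, ∑ n : Fin N,
            Real.cos (4 * π * ((m : ℕ) * k + (n : ℕ) * l) / N)) / 2 := by
      rw [Finset.sum_div]
      exact Finset.sum_congr rfl fun m _ => (Finset.sum_div _ _ _).symm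
    rw [h2, hre, hsplit, hzero]
    simp
  rw [hT, add_zero]
  simp only [Finset.sum_const, Finset.card_univ, Fintype.card_fin, nsmul_eq_mul]
  ring
/-- Corollary 1 of the paper: if a matrix of i.i.d. real Gaussian noise of variance `σ²S²`
is placed in the frequency domain and the two-dimensional inverse Fourier transform is
applied, then the real part of each entry `(k,l)` with `¬(N ∣ 2k ∧ N ∣ 2l)` follows a
normal distribution of variance `σ²S²/2`. -/
theorem gredp_conv2d (N : ℕ) (hN : 1 ≤ N) (S σ : ℝ) (hS : 0 < S) (hσ : 0 < σ)
    (k l : Fin N) (hkl : ¬ (N ∣ 2 * (k : ℕ) ∧ N ∣ 2 * (l : ℕ))) :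
    Measure.map
      (fun γ : Fin N × Fin N → ℝ =>
        ((1 / (N : ℂ)) * ∑ m : Fin N, ∑ n : Fin N,
          (γ (m, n) : ℂ) *
            Complex.exp ((2 * (Real.pi : ℂ) * Complex.I *
              (((m : ℕ) * (k : ℕ) + (n : ℕ) * (l : ℕ) : ℕ) : ℂ)) / N)).re)
      (Measure.pi (fun _ : Fin N × Fin N => gaussianReal 0 ((σ ^ 2 * S ^ 2).toNNReal)))
      = gaussianReal 0 ((σ ^ 2 * S ^ 2 / 2).toNNReal) := by
  have hNpos : 0 < N := hN
  have hN0 : (N : ℝ) ≠ 0 := Nat.cast_ne_zero.mpr hNpos.ne'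
  set c : Fin N × Fin N → ℝ :=
    fun p => Real.cos (2 * π * ((p.1 : ℕ) * (k : ℕ) + (p.2 : ℕ) * (l : ℕ)) / N) / N with hc
  have hfun : (fun γ : Fin N × Fin N → ℝ =>
        ((1 / (N : ℂ)) * ∑ m : Fin N, ∑ n : Fin N,
          (γ (m, n) : ℂ) *
            Complex.exp ((2 * (Real.pi : ℂ) * Complex.I *
              (((m : ℕ) * (k : ℕ) + (n : ℕ) * (l : ℕ) : ℕ) : ℂ)) / N)).re)
      = fun γ : Fin N × Fin N → ℝ => ∑ p : Fin N × Fin N, c p * γ p := by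
    funext γ
    rw [Fintype.sum_prod_type]
    rw [show (1 / (N : ℂ)) = (((N : ℝ)⁻¹ : ℝ) : ℂ) by push_cast; ring]
    rw [Complex.re_ofReal_mul, Complex.re_sum, Finset.mul_sum]
    refine Finset.sum_congr rfl fun m _ => ?_
    rw [Complex.re_sum, Finset.mul_sum]
    refine Finset.sum_congr rfl fun n _ => ?_
    rw [show (2 * (Real.pi : ℂ) * Complex.I *
              (((m : ℕ) * (k : ℕ) + (n : ℕ) * (l : ℕ) : ℕ) : ℂ)) / N
        = ((2 * π * ((m : ℕ) * (k : ℕ) + (n : ℕ) * (l : ℕ)) / N : ℝ) : ℂ) * Complex.I by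
      push_cast; ring]
    rw [Complex.re_ofReal_mul, Complex.exp_ofReal_mul_I_re]
    simp only [hc]
    ring
  rw [hfun, map_sum_pi c ((σ ^ 2 * S ^ 2).toNNReal)]
  congr 1
  have hv : (0:ℝ) ≤ σ ^ 2 * S ^ 2 := by positivity
  have hsum : ∑ p : Fin N × Fin N, (c p) ^ 2 = 1 / 2 := by
    rw [Fintype.sum_prod_type]
    have : ∀ (m n : Fin N), (c (m, n)) ^ 2
        = Real.cos (2 * π * ((m : ℕ) * (k : ℕ) + (n : ℕ) * (l : ℕ)) / N) ^ 2 / (N : ℝ) ^ 2 := by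
      intro m n
      simp only [hc]
      rw [div_pow]
    simp only [this]
    rw [Finset.sum_congr rfl (fun m _ => (Finset.sum_div _ _ _).symm), ← Finset.sum_div,
      cos_sq_sum N k l hNpos hkl]
    field_simp
  apply NNReal.coe_injective
  push_cast
  rw [Finset.sum_congr rfl (fun p _ => Real.coe_toNNReal _ (sq_nonneg (c p))),
    Real.coe_toNNReal _ hv, Real.coe_toNNReal _ (by positivity), hsum]
  ring
end

section
/- Let N ≥ 1, let v > 0, let a, b ∈ ℝ with a² + b² = 1, and let j be an integer such that N does not divide 2j. Let X_1,…,X_N be independent real random variables each with law gaussianReal 0 (a²v), and Y_1,…,Y_N be independent real random variables each with law gaussianReal 0 (b²v), with all 2N variables jointly independent. Then the law of the random variable Z = (1/√N) ∑_{k=1}^{N} (X_k·cos(2πkj/N) + Y_k·sin(2πkj/N)) — the pushforward of the product measure ⊗_{k=1}^{N} (gaussianReal 0 (a²v) ⊗ gaussianReal 0 (b²v)) under this linear map — is gaussianReal 0 (v/2). -/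
open MeasureTheory ProbabilityTheory

open Real
open scoped ENNReal NNReal

lemma sum_cos_two (N : ℕ) (hN : 1 ≤ N) (j : ℤ) (hj : ¬ ((N : ℤ) ∣ 2 * j)) :
    ∑ k : Fin N, Real.cos (2 * (2 * Real.pi * ((k : ℕ) + 1) * j / N)) = 0 := by
  have hN0 : (N : ℝ) ≠ 0 := by positivity
  set t : ℝ := 4 * Real.pi * j / N with ht
  have hcos : ∀ k : Fin N, Real.cos (2 * (2 * Real.pi * ((k : ℕ) + 1) * j / N))
      = (Complex.exp (t * Complex.I) ^ ((k : ℕ) + 1)).re := by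
    intro k
    rw [← Complex.exp_nat_mul]
    have : ((((k:ℕ):ℂ) + 1)) * ((t:ℝ) * Complex.I) = ((((k:ℕ)+1) * t : ℝ) : ℂ) * Complex.I := by
      push_cast; ring
    rw [show (((k:ℕ)+1 : ℕ) : ℂ) * ((t:ℝ) * Complex.I) = ((((k:ℕ)+1) * t : ℝ) : ℂ) * Complex.I by push_cast; ring]
    rw [Complex.exp_ofReal_mul_I_re]
    congr 1
    field_simp [ht]
    rw [ht]; field_simp; ring
  simp_rw [hcos]
  rw [← Complex.re_sum]
  set x : ℂ := Complex.exp (t * Complex.I) with hx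
  have hNC : (N : ℂ) ≠ 0 := by exact_mod_cast (Nat.cast_ne_zero (R := ℂ)).mpr (by omega)
  have hxN : x ^ N = 1 := by
    rw [hx, ← Complex.exp_nat_mul]
    have : (N : ℂ) * ((t:ℝ) * Complex.I) = ((2 * j : ℤ) : ℂ) * (2 * Real.pi * Complex.I) := by
      push_cast [ht]
      field_simp
      ring
    rw [this, Complex.exp_int_mul_two_pi_mul_I]
  have hx1 : x ≠ 1 := by
    intro h
    rw [hx, Complex.exp_eq_one_iff] at h
    obtain ⟨n, hn⟩ := h
    have h2 : ((t : ℝ) : ℂ) = (((n : ℝ) * (2 * Real.pi) : ℝ) : ℂ) :=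
      mul_right_cancel₀ Complex.I_ne_zero (by rw [hn]; push_cast; ring)
    have ht' : t = n * (2 * Real.pi) := by exact_mod_cast h2
    rw [ht] at ht'
    have : 2 * (j : ℝ) = n * N := by
      field_simp at ht'
      nlinarith [Real.pi_pos]
    have hZ : 2 * j = n * N := by exact_mod_cast this
    exact hj ⟨n, by linarith [hZ]⟩
  have hsum : ∑ k : Fin N, x ^ ((k : ℕ) + 1) = 0 := by
    have : ∑ k : Fin N, x ^ ((k : ℕ) + 1) = x * ∑ k ∈ Finset.range N, x ^ k := by
      rw [Finset.mul_sum, Fin.sum_univ_eq_sum_range (fun k => x ^ (k+1))]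
      exact Finset.sum_congr rfl fun k _ => by ring
    rw [this, geom_sum_eq hx1, hxN]
    simp
  rw [hsum, Complex.zero_re]

lemma gaussianPDFReal_mul_eq (m₁ m₂ : ℝ) {v₁ v₂ : ℝ≥0} (h₁ : v₁ ≠ 0) (h₂ : v₂ ≠ 0)
    (z x : ℝ) :
    gaussianPDFReal m₁ v₁ x * gaussianPDFReal (m₂ + x) v₂ z
      = gaussianPDFReal (m₁ + m₂) (v₁ + v₂) z *
        gaussianPDFReal (m₁ + (v₁ : ℝ) * (z - m₁ - m₂) / ((v₁ : ℝ) + v₂)) (v₁ * v₂ / (v₁ + v₂)) x := by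
  have hv₁ : (0:ℝ) < v₁ := lt_of_le_of_ne (v₁.coe_nonneg) (by exact_mod_cast (Ne.symm h₁))
  have hv₂ : (0:ℝ) < v₂ := lt_of_le_of_ne (v₂.coe_nonneg) (by exact_mod_cast (Ne.symm h₂))
  have hvs : (0:ℝ) < (v₁:ℝ) + v₂ := by linarith
  have hw : ((v₁ * v₂ / (v₁ + v₂) : ℝ≥0) : ℝ) = (v₁:ℝ) * v₂ / ((v₁:ℝ) + v₂) := by
    push_cast; ring
  simp only [gaussianPDFReal, NNReal.coe_add, hw]
  rw [mul_mul_mul_comm, ← Real.exp_add, mul_mul_mul_comm, ← Real.exp_add,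
    ← mul_inv, ← mul_inv]
  congr 1
  · -- constants
    congr 1
    rw [← Real.sqrt_mul (by positivity), ← Real.sqrt_mul (by positivity)]
    congr 1
    field_simp
  · -- exponents
    congr 1
    field_simp
    ring

lemma lintegral_gaussianPDF_mul (m₁ m₂ : ℝ) {v₁ v₂ : ℝ≥0} (h₁ : v₁ ≠ 0) (h₂ : v₂ ≠ 0)
    (z : ℝ) :
    ∫⁻ x, gaussianPDF m₁ v₁ x * gaussianPDF (m₂ + x) v₂ z
      = gaussianPDF (m₁ + m₂) (v₁ + v₂) z := by
  have hw : (v₁ * v₂ / (v₁ + v₂) : ℝ≥0) ≠ 0 := by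
    apply div_ne_zero (mul_ne_zero h₁ h₂)
    simp [h₁]
  simp only [gaussianPDF]
  calc ∫⁻ x, ENNReal.ofReal (gaussianPDFReal m₁ v₁ x) * ENNReal.ofReal (gaussianPDFReal (m₂ + x) v₂ z)
      = ∫⁻ x, ENNReal.ofReal (gaussianPDFReal (m₁ + m₂) (v₁ + v₂) z *
          gaussianPDFReal (m₁ + (v₁ : ℝ) * (z - m₁ - m₂) / ((v₁ : ℝ) + v₂)) (v₁ * v₂ / (v₁ + v₂)) x) := by
        congr 1; ext x
        rw [← ENNReal.ofReal_mul (gaussianPDFReal_nonneg _ _ _),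
          gaussianPDFReal_mul_eq m₁ m₂ h₁ h₂ z x]
    _ = ENNReal.ofReal (gaussianPDFReal (m₁ + m₂) (v₁ + v₂) z) *
          ∫⁻ x, ENNReal.ofReal (gaussianPDFReal (m₁ + (v₁ : ℝ) * (z - m₁ - m₂) / ((v₁ : ℝ) + v₂)) (v₁ * v₂ / (v₁ + v₂)) x) := by
        simp_rw [ENNReal.ofReal_mul (gaussianPDFReal_nonneg _ _ _)]
        exact lintegral_const_mul _ ((measurable_gaussianPDFReal _ _).ennreal_ofReal)
    _ = ENNReal.ofReal (gaussianPDFReal (m₁ + m₂) (v₁ + v₂) z) := by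
        rw [lintegral_gaussianPDFReal_eq_one _ hw, mul_one]

lemma gaussianReal_conv (m₁ m₂ : ℝ) (v₁ v₂ : ℝ≥0) :
    ((gaussianReal m₁ v₁).prod (gaussianReal m₂ v₂)).map (fun p : ℝ × ℝ => p.1 + p.2)
      = gaussianReal (m₁ + m₂) (v₁ + v₂) := by
  by_cases h₁ : v₁ = 0
  · subst h₁
    rw [gaussianReal_zero_var, Measure.dirac_prod,
      Measure.map_map (by fun_prop) (by fun_prop)]
    have : ((fun p : ℝ × ℝ => p.1 + p.2) ∘ Prod.mk m₁) = (m₁ + ·) := rfl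
    rw [this, gaussianReal_map_const_add, add_comm m₂ m₁, zero_add]
  by_cases h₂ : v₂ = 0
  · subst h₂
    rw [gaussianReal_zero_var, Measure.prod_dirac,
      Measure.map_map (by fun_prop) (by fun_prop)]
    have : ((fun p : ℝ × ℝ => p.1 + p.2) ∘ fun x => (x, m₂)) = (· + m₂) := rfl
    rw [this, gaussianReal_map_add_const, add_zero]
  have hv : v₁ + v₂ ≠ 0 := by simp [h₁]
  ext s hs
  rw [Measure.map_apply (by fun_prop) hs,
    Measure.prod_apply (hs.preimage (by fun_prop))]
  have key : ∀ x : ℝ, (gaussianReal m₂ v₂) (Prod.mk x ⁻¹' ((fun p : ℝ × ℝ => p.1 + p.2) ⁻¹' s))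
      = ∫⁻ z in s, gaussianPDF (m₂ + x) v₂ z := by
    intro x
    have hpre : Prod.mk x ⁻¹' ((fun p : ℝ × ℝ => p.1 + p.2) ⁻¹' s) = (x + ·) ⁻¹' s := rfl
    rw [hpre, ← Measure.map_apply (by fun_prop) hs, gaussianReal_map_const_add,
      gaussianReal_apply _ h₂ s]
  simp_rw [key]
  have hmeas : Measurable (Function.uncurry fun x z => gaussianPDF (m₂ + x) v₂ z) := by
    simp only [gaussianPDF, gaussianPDFReal]
    apply Measurable.ennreal_ofReal
    fun_prop
  rw [gaussianReal_of_var_ne_zero m₁ h₁,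
    lintegral_withDensity_eq_lintegral_mul _ (measurable_gaussianPDF _ _)
      (by exact hmeas.lintegral_prod_right')]
  simp only [Pi.mul_apply]
  have swap : ∫⁻ x, gaussianPDF m₁ v₁ x * ∫⁻ z in s, gaussianPDF (m₂ + x) v₂ z
      = ∫⁻ z in s, ∫⁻ x, gaussianPDF m₁ v₁ x * gaussianPDF (m₂ + x) v₂ z := by
    have : ∀ x, gaussianPDF m₁ v₁ x * ∫⁻ z in s, gaussianPDF (m₂ + x) v₂ z
        = ∫⁻ z in s, gaussianPDF m₁ v₁ x * gaussianPDF (m₂ + x) v₂ z := fun x =>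
      (lintegral_const_mul _ (measurable_gaussianPDF _ _)).symm
    simp_rw [this]
    rw [lintegral_lintegral_swap]
    apply Measurable.aemeasurable
    refine Measurable.mul (f := fun p : ℝ × ℝ => gaussianPDF m₁ v₁ p.1)
      (g := Function.uncurry fun x z => gaussianPDF (m₂ + x) v₂ z) ?_ ?_
    · exact (measurable_gaussianPDF m₁ v₁).comp measurable_fst
    · exact hmeas
  rw [swap]
  simp_rw [lintegral_gaussianPDF_mul m₁ m₂ h₁ h₂]
  rw [← gaussianReal_apply _ hv s]

lemma pi_sum_gaussian {α : Type*} [MeasurableSpace α] :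
    ∀ (n : ℕ) (μ : Fin n → Measure α), (∀ i, IsProbabilityMeasure (μ i)) →
    ∀ (f : Fin n → α → ℝ), (∀ i, Measurable (f i)) →
    ∀ (w : Fin n → ℝ≥0), (∀ i, (μ i).map (f i) = gaussianReal 0 (w i)) →
    (Measure.pi μ).map (fun ω => ∑ i, f i (ω i)) = gaussianReal 0 (∑ i, w i) := by
  intro n
  induction n with
  | zero =>
    intro μ hμ f hf w hw
    have : IsProbabilityMeasure (Measure.pi μ) := by infer_instance
    simp only [Finset.univ_eq_empty, Finset.sum_empty]
    rw [show (fun ω : Fin 0 → α => (0:ℝ)) = (fun _ => 0) from rfl, Measure.map_const,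
      measure_univ, one_smul, gaussianReal_zero_var]
  | succ n ih =>
    intro μ hμ f hf w hw
    have hsf : ∀ i, SigmaFinite (μ i) := fun i => by haveI := hμ i; infer_instance
    haveI := hsf
    haveI := hμ 0
    haveI : ∀ j : Fin n, SigmaFinite (μ ((0 : Fin (n+1)).succAbove j)) := fun j => hsf _
    have hmp := measurePreserving_piFinSuccAbove μ 0
    set e := MeasurableEquiv.piFinSuccAbove (fun _ : Fin (n+1) => α) 0 with he
    have hcomp : (fun ω : Fin (n+1) → α => ∑ i, f i (ω i))
        = (fun p : α × (Fin n → α) => f 0 p.1 + ∑ i : Fin n, f i.succ (p.2 i)) ∘ e := by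
      funext ω
      rw [Fin.sum_univ_succ]
      simp [he, MeasurableEquiv.piFinSuccAbove, Fin.insertNthEquiv, Fin.removeNth,
        Fin.zero_succAbove, Fin.tail]
    rw [hcomp, ← Measure.map_map (by fun_prop) e.measurable, hmp.map_eq]
    have hprodmap : (fun p : α × (Fin n → α) => f 0 p.1 + ∑ i : Fin n, f i.succ (p.2 i))
        = (fun q : ℝ × ℝ => q.1 + q.2) ∘ Prod.map (f 0) (fun ω : Fin n → α => ∑ i, f i.succ (ω i)) := rfl
    rw [hprodmap, ← Measure.map_map (by fun_prop) ((hf 0).prodMap (by fun_prop)),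
      ← Measure.map_prod_map _ _ (hf 0) (by fun_prop)]
    have htail : (Measure.pi fun j : Fin n => μ ((0 : Fin (n+1)).succAbove j)).map
        (fun ω : Fin n → α => ∑ i, f i.succ (ω i)) = gaussianReal 0 (∑ i : Fin n, w i.succ) := by
      have : (fun j : Fin n => μ ((0 : Fin (n+1)).succAbove j)) = fun j => μ j.succ := by
        funext j; rw [Fin.zero_succAbove]
      rw [this]
      exact ih _ (fun i => hμ i.succ) _ (fun i => hf i.succ) _ (fun i => hw i.succ)
    rw [hw 0, htail, gaussianReal_conv, zero_add, ← Fin.sum_univ_succ]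

lemma gaussian_pair_map (c s : ℝ) (v₁ v₂ : ℝ≥0) :
    ((gaussianReal 0 v₁).prod (gaussianReal 0 v₂)).map (fun p : ℝ × ℝ => p.1 * c + p.2 * s)
      = gaussianReal 0 (⟨c ^ 2, sq_nonneg c⟩ * v₁ + ⟨s ^ 2, sq_nonneg s⟩ * v₂) := by
  have h : (fun p : ℝ × ℝ => p.1 * c + p.2 * s)
      = (fun q : ℝ × ℝ => q.1 + q.2) ∘ Prod.map (· * c) (· * s) := rfl
  rw [h, ← Measure.map_map (by fun_prop) (by fun_prop),
    ← Measure.map_prod_map _ _ (by fun_prop) (by fun_prop),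
    gaussianReal_map_mul_const, gaussianReal_map_mul_const, gaussianReal_conv]
  norm_num
  rfl


/-- Central distributional computation in the proof of Theorem 2: if `X_1,…,X_N` are
i.i.d. `N(0, a²v)`, `Y_1,…,Y_N` are i.i.d. `N(0, b²v)`, all jointly independent, with
`a² + b² = 1` and `N ∤ 2j`, then
`Z = (1/√N) ∑_{k=1}^N (X_k cos(2πkj/N) + Y_k sin(2πkj/N))` is `N(0, v/2)`. -/
theorem gaussian_lin_comb (N : ℕ) (hN : 1 ≤ N) (v : ℝ) (hv : 0 < v)
    (a b : ℝ) (hab : a ^ 2 + b ^ 2 = 1) (j : ℤ) (hj : ¬ ((N : ℤ) ∣ 2 * j)) :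
    Measure.map
      (fun ω : Fin N → ℝ × ℝ =>
        (1 / Real.sqrt N) *
          ∑ k : Fin N,
            ((ω k).1 * Real.cos (2 * Real.pi * ((k : ℕ) + 1) * j / N)
              + (ω k).2 * Real.sin (2 * Real.pi * ((k : ℕ) + 1) * j / N)))
      (Measure.pi (fun _ : Fin N =>
        (gaussianReal 0 ((a ^ 2 * v).toNNReal)).prod
          (gaussianReal 0 ((b ^ 2 * v).toNNReal))))
      = gaussianReal 0 ((v / 2).toNNReal) := by
  set θ : Fin N → ℝ := fun k => 2 * Real.pi * ((k : ℕ) + 1) * j / N with hθ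
  set f : Fin N → ℝ × ℝ → ℝ := fun k p => p.1 * Real.cos (θ k) + p.2 * Real.sin (θ k) with hfdef
  set w : Fin N → ℝ≥0 := fun k =>
    ⟨Real.cos (θ k) ^ 2, sq_nonneg _⟩ * (a ^ 2 * v).toNNReal
      + ⟨Real.sin (θ k) ^ 2, sq_nonneg _⟩ * (b ^ 2 * v).toNNReal with hwdef
  have hμ : ∀ k : Fin N, IsProbabilityMeasure
      ((gaussianReal 0 ((a ^ 2 * v).toNNReal)).prod (gaussianReal 0 ((b ^ 2 * v).toNNReal))) :=
    fun k => by infer_instance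
  have hsum := pi_sum_gaussian N _ hμ f (fun k => by fun_prop) w
    (fun k => gaussian_pair_map _ _ _ _)
  have hcomp : (fun ω : Fin N → ℝ × ℝ =>
        (1 / Real.sqrt N) * ∑ k : Fin N, ((ω k).1 * Real.cos (θ k) + (ω k).2 * Real.sin (θ k)))
      = (fun x : ℝ => (1 / Real.sqrt N) * x) ∘ (fun ω => ∑ k, f k (ω k)) := rfl
  rw [hcomp, ← Measure.map_map (by fun_prop) (by fun_prop), hsum,
    gaussianReal_map_const_mul, mul_zero]
  congr 1
  -- variance computation
  have hN0 : (0:ℝ) < N := by exact_mod_cast hN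
  have hS := sum_cos_two N hN j hj
  have hcos2 : ∑ k : Fin N, Real.cos (θ k) ^ 2 = N / 2 := by
    have h1 : ∑ k : Fin N, Real.cos (θ k) ^ 2
        = ∑ k : Fin N, (1 / 2 + Real.cos (2 * θ k) / 2) := by
      simp_rw [Real.cos_sq]
    have h2 : ∑ k : Fin N, Real.cos (2 * θ k) = 0 := by simpa [hθ] using hS
    have h3 : ∑ x : Fin N, Real.cos (2 * θ x) / 2 = 0 := by
      rw [← Finset.sum_div, h2, zero_div]
    rw [h1, Finset.sum_add_distrib, h3, add_zero, Finset.sum_const, Finset.card_univ,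
      Fintype.card_fin, nsmul_eq_mul]
    ring
  have hsin2 : ∑ k : Fin N, Real.sin (θ k) ^ 2 = N / 2 := by
    have h1 : ∑ k : Fin N, Real.sin (θ k) ^ 2
        = ∑ k : Fin N, (1 - Real.cos (θ k) ^ 2) := by
      simp_rw [Real.sin_sq]
    rw [h1, Finset.sum_sub_distrib, hcos2, Finset.sum_const, Finset.card_univ,
      Fintype.card_fin, nsmul_eq_mul, mul_one]
    ring
  apply NNReal.coe_injective
  push_cast [NNReal.coe_sum]
  have hav : ((a ^ 2 * v).toNNReal : ℝ) = a ^ 2 * v := Real.coe_toNNReal _ (by positivity)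
  have hbv : ((b ^ 2 * v).toNNReal : ℝ) = b ^ 2 * v := Real.coe_toNNReal _ (by positivity)
  have hv2 : (((v / 2).toNNReal : ℝ)) = v / 2 := Real.coe_toNNReal _ (by positivity)
  rw [hv2]
  simp only [hwdef, NNReal.coe_add, NNReal.coe_mul, NNReal.coe_mk, hav, hbv]
  change (1 / Real.sqrt N) ^ 2 * ∑ x, (w x : ℝ) = v / 2
  have e : ∀ x : Fin N, (w x : ℝ) = Real.cos (θ x) ^ 2 * (a ^ 2 * v) + Real.sin (θ x) ^ 2 * (b ^ 2 * v) := fun x => by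
    show Real.cos (θ x) ^ 2 * ((a ^ 2 * v).toNNReal : ℝ) + Real.sin (θ x) ^ 2 * ((b ^ 2 * v).toNNReal : ℝ) = _
    rw [hav, hbv]
  simp only [e]
  rw [Finset.sum_add_distrib, ← Finset.sum_mul, ← Finset.sum_mul, hcos2, hsin2]
  have hsq : (1 / Real.sqrt N) ^ 2 = 1 / N := by
    rw [div_pow, one_pow, Real.sq_sqrt hN0.le]
  rw [hsq]
  field_simp
  linear_combination hab
end
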